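/- arXiv:1506.03574 — 6 statements merged into one kernel-verified Lean document; each statement's English description precedes it below -/
import Mathlib

section
/- The operator D maps ℂ[z] into ℂ[z]. Its kernel in ℂ[z] is finite dimensional and contained in ℂ[z]_{<M}, the quotient ℂ[z]/D(ℂ[z]) is finite dimensional, and dim_ℂ(ℂ[z]/D(ℂ[z])) − dim_ℂ(ker D ∩ ℂ[z]) = δ − μ; in other words, the index of the linear map D : ℂ[z] → ℂ[z] equals μ − δ. -/
open Complex Polynomial Finset

/-- The differential operator `D f = ∑_{j=0}^{μ} P_{μ-j} · f^{(j)}`. -/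
noncomputable def Dop (μ : ℕ) (P : ℕ → Polynomial ℂ) (f : ℂ → ℂ) : ℂ → ℂ :=
  fun z => ∑ j ∈ Finset.range (μ + 1), (P (μ - j)).eval z * iteratedDeriv j f z

/-- The polynomial `R(Y) = ∑_{j=0}^{μ} a_{μ-j} · Y(Y-1)⋯(Y-j+1)`, where `a_i` is the
coefficient of `z^{δ-i}` in `P_i`. -/
noncomputable def Rpoly (μ δ : ℕ) (P : ℕ → Polynomial ℂ) : Polynomial ℂ :=
  ∑ j ∈ Finset.range (μ + 1),
    Polynomial.C ((P (μ - j)).coeff (δ - (μ - j))) *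
      ∏ l ∈ Finset.range j, (Polynomial.X - Polynomial.C (l : ℂ))

/-- The set of finite singularities of `D`: the roots of `P₀`. -/
def Sing (P0 : Polynomial ℂ) : Set ℂ := {ρ : ℂ | P0.eval ρ = 0}

/-- The cut plane `Ω_θ`: the plane minus the closed half-lines of direction `π - θ`
starting at the points of `S`. -/
def cutPlane (S : Set ℂ) (θ : ℝ) : Set ℂ :=
  {z : ℂ | ∀ ρ ∈ S, ∀ t : ℝ, 0 ≤ t →
    z ≠ ρ + (t : ℂ) * Complex.exp (Complex.I * ((Real.pi - θ : ℝ) : ℂ))}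

/-- The cut disk `D_ρ(ε)` at `ρ`. -/
def cutDisk (ρ : ℂ) (θ : ℝ) (ε : ℝ) : Set ℂ :=
  {z : ℂ | 0 < ‖z - ρ‖ ∧ ‖z - ρ‖ < ε ∧
    ∀ t : ℝ, 0 ≤ t → z - ρ ≠ (t : ℂ) * Complex.exp (Complex.I * ((Real.pi - θ : ℝ) : ℂ))}

/-- `g`, holomorphic on the cut disk `D_ρ(ε)`, extends holomorphically at `ρ`. -/
def ExtendsHolAt (g : ℂ → ℂ) (ρ : ℂ) (θ : ℝ) (ε : ℝ) : Prop :=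
  ∃ ε' : ℝ, 0 < ε' ∧ ε' ≤ ε ∧ ∃ h : ℂ → ℂ,
    DifferentiableOn ℂ h (Metric.ball ρ ε') ∧ ∀ z ∈ cutDisk ρ θ ε', g z = h z

/-- `θ` is an admissible direction for the singularity set `S`:
`ρ - ρ' ∉ ℝ · e^{-iθ}` for all distinct `ρ, ρ' ∈ S`. -/
def GoodDirection (S : Set ℂ) (θ : ℝ) : Prop :=
  ∀ ρ ∈ S, ∀ ρ' ∈ S, ρ ≠ ρ' → ∀ t : ℝ,
    ρ - ρ' ≠ (t : ℂ) * Complex.exp (-Complex.I * (θ : ℂ))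
/-- The operator `D` acting on polynomials, as a linear map `ℂ[z] → ℂ[z]`. -/
noncomputable def DLin (μ : ℕ) (P : ℕ → Polynomial ℂ) :
    Polynomial ℂ →ₗ[ℂ] Polynomial ℂ :=
  ∑ j ∈ Finset.range (μ + 1),
    LinearMap.comp (LinearMap.mulLeft ℂ (P (μ - j)))
      ((Polynomial.derivative : Module.End ℂ (Polynomial ℂ)) ^ j)

section ProofAux

lemma DLin_apply (μ : ℕ) (P : ℕ → Polynomial ℂ) (p : Polynomial ℂ) :
    DLin μ P p = ∑ j ∈ Finset.range (μ + 1), P (μ - j) * (Polynomial.derivative^[j] p) := by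
  simp [DLin, LinearMap.sum_apply, LinearMap.mulLeft_apply, Module.End.pow_apply]

lemma descFactorial_cast_eq_prod (n j : ℕ) :
    ((n.descFactorial j : ℂ)) = ∏ l ∈ Finset.range j, ((n : ℂ) - l) := by
  induction j with
  | zero => simp
  | succ j ih =>
    rw [Finset.prod_range_succ, ← ih, Nat.descFactorial_succ]
    rcases le_or_gt (j + 1) n with h | h
    · rw [Nat.cast_mul, Nat.cast_sub (by omega)]; ring
    · have h1 : n - j = 0 := by omega
      rw [h1, zero_mul, Nat.cast_zero]
      rcases eq_or_lt_of_le (by omega : n ≤ j) with h2 | h2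
      · rw [← h2]; ring
      · rw [Nat.descFactorial_eq_zero_iff_lt.mpr h2, Nat.cast_zero, zero_mul]

lemma eval_iterate_derivative (p : Polynomial ℂ) (j : ℕ) :
    (fun z => (Polynomial.derivative^[j] p).eval z) = iteratedDeriv j (fun w => p.eval w) := by
  induction j with
  | zero => simp
  | succ j ih =>
    rw [iteratedDeriv_succ, ← ih]
    funext z
    rw [Function.iterate_succ_apply']
    exact (Polynomial.deriv (p := Polynomial.derivative^[j] p)).symm

variable {μ δ : ℕ} {P : ℕ → Polynomial ℂ}

lemma coeff_DLin_X_pow_eq_zero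
    (hdeg : ∀ i, i ≤ μ → ∀ k, δ < k + i → (P i).coeff k = 0)
    (n k : ℕ) (h : n + δ < k + μ) :
    (DLin μ P (Polynomial.X ^ n)).coeff k = 0 := by
  rw [DLin_apply, Polynomial.finset_sum_coeff]
  apply Finset.sum_eq_zero
  intro j hj
  have hj' : j ≤ μ := Nat.lt_succ_iff.mp (Finset.mem_range.mp hj)
  rw [Polynomial.iterate_derivative_X_pow_eq_C_mul, mul_left_comm, Polynomial.coeff_C_mul,
    Polynomial.coeff_mul_X_pow']
  rcases Nat.lt_or_ge n j with hnj | hnj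
  · simp [Nat.descFactorial_eq_zero_iff_lt.mpr hnj]
  · split_ifs with hle
    · rw [hdeg (μ - j) (by omega) (k - (n - j)) (by omega), mul_zero]
    · rw [mul_zero]

lemma coeff_DLin_X_pow_key
    (hdeg : ∀ i, i ≤ μ → ∀ k, δ < k + i → (P i).coeff k = 0)
    (n : ℕ) (hn : μ ≤ n + δ) :
    (DLin μ P (Polynomial.X ^ n)).coeff (n + δ - μ) = (Rpoly μ δ P).eval (n : ℂ) := by
  rw [DLin_apply, Polynomial.finset_sum_coeff, Rpoly, Polynomial.eval_finset_sum]
  apply Finset.sum_congr rfl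
  intro j hj
  have hj' : j ≤ μ := Nat.lt_succ_iff.mp (Finset.mem_range.mp hj)
  rw [Polynomial.iterate_derivative_X_pow_eq_C_mul, mul_left_comm, Polynomial.coeff_C_mul,
    Polynomial.coeff_mul_X_pow', Polynomial.eval_mul, Polynomial.eval_C, Polynomial.eval_prod]
  simp only [Polynomial.eval_sub, Polynomial.eval_X, Polynomial.eval_natCast, Polynomial.eval_C]
  rw [← descFactorial_cast_eq_prod]
  rcases Nat.lt_or_ge n j with hnj | hnj
  · simp [Nat.descFactorial_eq_zero_iff_lt.mpr hnj]
  · rcases le_or_gt μ (δ + j) with hc | hc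
    · rw [if_pos (by omega)]
      have he : n + δ - μ - (n - j) = δ - (μ - j) := by omega
      rw [he, mul_comm]
    · rw [if_neg (by omega), mul_zero,
        hdeg (μ - j) (by omega) (δ - (μ - j)) (by omega), zero_mul]

lemma coeff_DLin (p : Polynomial ℂ) (k : ℕ) :
    (DLin μ P p).coeff k
      = ∑ m ∈ p.support, p.coeff m * (DLin μ P (Polynomial.X ^ m)).coeff k := by
  conv_lhs => rw [p.as_sum_support]
  rw [map_sum, Polynomial.finset_sum_coeff]
  apply Finset.sum_congr rfl
  intro m _
  rw [← Polynomial.C_mul_X_pow_eq_monomial, ← Polynomial.smul_eq_C_mul, map_smul,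
    Polynomial.coeff_smul, smul_eq_mul]

lemma coeff_DLin_top
    (hdeg : ∀ i, i ≤ μ → ∀ k, δ < k + i → (P i).coeff k = 0)
    (p : Polynomial ℂ) (hp : p ≠ 0) (hn : μ ≤ p.natDegree + δ) :
    (DLin μ P p).coeff (p.natDegree + δ - μ)
      = p.leadingCoeff * (Rpoly μ δ P).eval (p.natDegree : ℂ) := by
  rw [coeff_DLin, Finset.sum_eq_single p.natDegree]
  · rw [coeff_DLin_X_pow_key hdeg _ hn]; rfl
  · intro m hm hne
    have hm' : m < p.natDegree :=
      lt_of_le_of_ne (Polynomial.le_natDegree_of_mem_supp m hm) hne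
    rw [coeff_DLin_X_pow_eq_zero hdeg m _ (by omega), mul_zero]
  · intro h; exact absurd (Polynomial.natDegree_mem_support_of_nonzero hp) h


end ProofAux

/-- `D` maps `ℂ[z]` to `ℂ[z]` (compatibly with the analytic operator), its kernel in `ℂ[z]`
is finite dimensional and contained in `ℂ[z]_{<M}`, the quotient `ℂ[z]/D(ℂ[z])` is finite
dimensional, and the index of `D : ℂ[z] → ℂ[z]` equals `μ - δ`. -/
theorem index_of_D_on_polynomials
    (μ δ M : ℕ) (P : ℕ → Polynomial ℂ)
    (hμ : 1 ≤ μ)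
    (hlead : (P 0).coeff δ ≠ 0)
    (hdeg : ∀ i, i ≤ μ → ∀ k, δ < k + i → (P i).coeff k = 0)
    (hM1 : μ ≤ δ + M)
    (hM2 : ∀ k : ℕ, M ≤ k → (Rpoly μ δ P).eval (k : ℂ) ≠ 0)
    (hMmin : ∀ M' : ℕ, M' < M →
      ¬ (μ ≤ δ + M' ∧ ∀ k : ℕ, M' ≤ k → (Rpoly μ δ P).eval (k : ℂ) ≠ 0)) :
    (∀ (p : Polynomial ℂ) (z : ℂ),
        (DLin μ P p).eval z = Dop μ P (fun w => p.eval w) z) ∧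
    FiniteDimensional ℂ (LinearMap.ker (DLin μ P)) ∧
    (∀ p : Polynomial ℂ, DLin μ P p = 0 → p ∈ Polynomial.degreeLT ℂ M) ∧
    FiniteDimensional ℂ (Polynomial ℂ ⧸ LinearMap.range (DLin μ P)) ∧
    (Module.finrank ℂ (Polynomial ℂ ⧸ LinearMap.range (DLin μ P)) : ℤ)
        - (Module.finrank ℂ (LinearMap.ker (DLin μ P)) : ℤ)
      = (δ : ℤ) - (μ : ℤ) := by
  set N : ℕ := M + δ - μ with hNdef
  have hN : N + μ = M + δ := by omega
  set V : Submodule ℂ (Polynomial ℂ) := Polynomial.degreeLT ℂ M with hVdef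
  set W : Submodule ℂ (Polynomial ℂ) := Polynomial.degreeLT ℂ N with hWdef
  set D : Polynomial ℂ →ₗ[ℂ] Polynomial ℂ := DLin μ P with hDdef
  -- the top-coefficient is nonzero for polys of degree ≥ M
  have key : ∀ p : Polynomial ℂ, p ≠ 0 → M ≤ p.natDegree →
      (D p).coeff (p.natDegree + δ - μ) ≠ 0 := by
    intro p hp hMp
    rw [hDdef, coeff_DLin_top hdeg p hp (by omega)]
    exact mul_ne_zero (Polynomial.leadingCoeff_ne_zero.mpr hp) (hM2 _ hMp)
  -- C2 : D p ∈ W → p ∈ V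
  have hC2 : ∀ p : Polynomial ℂ, D p ∈ W → p ∈ V := by
    intro p hp
    rw [hVdef, Polynomial.mem_degreeLT]
    by_contra hlt
    have hp0 : p ≠ 0 := by
      rintro rfl
      exact hlt (Polynomial.mem_degreeLT.mp (Submodule.zero_mem (Polynomial.degreeLT ℂ M)))
    have hMp : M ≤ p.natDegree := by
      have h1 := not_lt.mp hlt
      rw [Polynomial.degree_eq_natDegree hp0] at h1
      exact_mod_cast h1
    have h2 := Polynomial.mem_degreeLT.mp hp
    rw [Polynomial.degree_lt_iff_coeff_zero] at h2
    exact key p hp0 hMp (h2 _ (by omega))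
  have hker_le : ∀ p : Polynomial ℂ, D p = 0 → p ∈ V := by
    intro p hp
    exact hC2 p (hp ▸ Submodule.zero_mem W)
  -- C1 : p ∈ V → D p ∈ W
  have hC1 : ∀ p : Polynomial ℂ, p ∈ V → D p ∈ W := by
    intro p hp
    rw [hWdef, Polynomial.mem_degreeLT, Polynomial.degree_lt_iff_coeff_zero]
    intro k hk
    rw [hDdef, coeff_DLin]
    apply Finset.sum_eq_zero
    intro m hm
    have hmM : (m : WithBot ℕ) < (M : ℕ) :=
      lt_of_le_of_lt (Polynomial.le_degree_of_ne_zero (Polynomial.mem_support_iff.mp hm))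
        (Polynomial.mem_degreeLT.mp hp)
    have hmM' : m < M := by exact_mod_cast hmM
    rw [coeff_DLin_X_pow_eq_zero hdeg m k (by omega), mul_zero]
  -- finite dimensionality of degreeLT
  have hVfin : ∀ n : ℕ, FiniteDimensional ℂ (Polynomial.degreeLT ℂ n) := by
    intro n
    exact Module.Finite.equiv (Polynomial.degreeLTEquiv ℂ n).symm
  have hVrank : ∀ n : ℕ, Module.finrank ℂ (Polynomial.degreeLT ℂ n) = n := by
    intro n
    rw [(Polynomial.degreeLTEquiv ℂ n).finrank_eq, Module.finrank_fin_fun]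
  haveI : FiniteDimensional ℂ V := hVfin M
  haveI : FiniteDimensional ℂ W := hVfin N
  have hKle : LinearMap.ker D ≤ V := fun p hp => hker_le p (LinearMap.mem_ker.mp hp)
  haveI hKfin : FiniteDimensional ℂ (LinearMap.ker D) :=
    Submodule.finiteDimensional_of_le hKle
  -- map D V = range D ⊓ W
  have hmap : Submodule.map D V = LinearMap.range D ⊓ W := by
    apply le_antisymm
    · rintro q hq
      obtain ⟨p, hp, rfl⟩ := Submodule.mem_map.mp hq
      exact ⟨⟨p, rfl⟩, hC1 p hp⟩
    · rintro q ⟨⟨p, rfl⟩, hq⟩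
      exact Submodule.mem_map.mpr ⟨p, hC2 p hq, rfl⟩
  -- C3 : every q is congruent to an element of W modulo range D
  have hC3 : ∀ q : Polynomial ℂ, ∃ r ∈ W, q - r ∈ LinearMap.range D := by
    have main : ∀ d : ℕ, ∀ q : Polynomial ℂ, q.natDegree ≤ d →
        ∃ r ∈ W, q - r ∈ LinearMap.range D := by
      intro d
      induction d using Nat.strong_induction_on with
      | _ d ih =>
        intro q hqd
        by_cases hqW : q ∈ W
        · exact ⟨q, hqW, by simpa using Submodule.zero_mem _⟩
        · have hq0 : q ≠ 0 := by
            rintro rfl; exact hqW (Submodule.zero_mem W)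
          have hNq : N ≤ q.natDegree := by
            have h1 : ¬ q.degree < (N : ℕ) := fun h => hqW (Polynomial.mem_degreeLT.mpr h)
            have h2 := not_lt.mp h1
            rw [Polynomial.degree_eq_natDegree hq0] at h2
            exact_mod_cast h2
          set dq : ℕ := q.natDegree with hdq
          set n : ℕ := dq + μ - δ with hn
          have hn1 : n + δ = dq + μ := by omega
          have hn2 : M ≤ n := by omega
          have hn3 : n + δ - μ = dq := by omega
          have hRn : (Rpoly μ δ P).eval (n : ℂ) ≠ 0 := hM2 n hn2
          set c : ℂ := q.coeff dq / (Rpoly μ δ P).eval (n : ℂ) with hc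
          set q' : Polynomial ℂ := q - c • D (Polynomial.X ^ n) with hq'
          have hdq' : q'.degree < (dq : ℕ) := by
            rw [Polynomial.degree_lt_iff_coeff_zero]
            intro m hm
            rcases eq_or_lt_of_le hm with rfl | hlt
            · rw [hq', Polynomial.coeff_sub, Polynomial.coeff_smul, hDdef, ← hn3,
                coeff_DLin_X_pow_key hdeg n (by omega), smul_eq_mul, hc,
                div_mul_cancel₀ _ hRn, hn3, sub_self]
            · rw [hq', Polynomial.coeff_sub, Polynomial.coeff_smul, hDdef,
                coeff_DLin_X_pow_eq_zero hdeg n m (by omega),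
                Polynomial.coeff_eq_zero_of_natDegree_lt hlt, smul_zero, sub_self]
          have hstep : ∃ r ∈ W, q' - r ∈ LinearMap.range D := by
            by_cases hq'0 : q' = 0
            · exact ⟨0, Submodule.zero_mem W, by simp [hq'0]⟩
            · have hlt : q'.natDegree < dq := by
                have := Polynomial.natDegree_lt_natDegree hq'0
                  (lt_of_lt_of_le hdq' (by rw [Polynomial.degree_eq_natDegree hq0]))
                exact this
              exact ih q'.natDegree (by omega) q' le_rfl
          obtain ⟨r, hrW, hr⟩ := hstep
          refine ⟨r, hrW, ?_⟩
          have : q - r = (q' - r) + c • D (Polynomial.X ^ n) := by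
            rw [hq']; ring
          rw [this]
          exact Submodule.add_mem _ hr (Submodule.smul_mem _ _ ⟨Polynomial.X ^ n, rfl⟩)
    intro q; exact main q.natDegree q le_rfl
  -- surjection W → coker
  set Φ : W →ₗ[ℂ] Polynomial ℂ ⧸ LinearMap.range D :=
    (LinearMap.range D).mkQ.comp W.subtype with hΦdef
  have hΦsurj : Function.Surjective Φ := by
    intro x
    obtain ⟨q, rfl⟩ := Submodule.mkQ_surjective _ x
    obtain ⟨r, hrW, hqr⟩ := hC3 q
    refine ⟨⟨r, hrW⟩, ?_⟩
    rw [hΦdef]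
    simp only [LinearMap.comp_apply, Submodule.subtype_apply, Submodule.mkQ_apply]
    rw [Submodule.Quotient.eq]
    have hrq : r - q = -(q - r) := by ring
    rw [hrq]
    exact Submodule.neg_mem _ hqr
  haveI hcoker : FiniteDimensional ℂ (Polynomial ℂ ⧸ LinearMap.range D) :=
    FiniteDimensional.of_surjective Φ hΦsurj
  -- rank computations
  set Ψ : V →ₗ[ℂ] Polynomial ℂ := D.comp V.subtype with hΨdef
  have hrn1 := LinearMap.finrank_range_add_finrank_ker Ψ
  have hrn2 := LinearMap.finrank_range_add_finrank_ker Φ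
  have hrangeΨ : LinearMap.range Ψ = LinearMap.range D ⊓ W := by
    rw [hΨdef, LinearMap.range_comp, Submodule.range_subtype, hmap]
  have hkerΨ : Module.finrank ℂ (LinearMap.ker Ψ) = Module.finrank ℂ (LinearMap.ker D) := by
    rw [hΨdef, LinearMap.ker_comp]
    exact (Submodule.comapSubtypeEquivOfLe hKle).finrank_eq
  have hkerΦ : Module.finrank ℂ (LinearMap.ker Φ)
      = Module.finrank ℂ (LinearMap.range D ⊓ W : Submodule ℂ (Polynomial ℂ)) := by
    rw [hΦdef, LinearMap.ker_comp, Submodule.ker_mkQ]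
    have he : Submodule.comap W.subtype (LinearMap.range D)
        = Submodule.comap W.subtype (LinearMap.range D ⊓ W) := by
      rw [Submodule.comap_inf, Submodule.comap_subtype_self, inf_top_eq]
    rw [he]
    exact (Submodule.comapSubtypeEquivOfLe inf_le_right).finrank_eq
  have hrangeΦ : Module.finrank ℂ (LinearMap.range Φ)
      = Module.finrank ℂ (Polynomial ℂ ⧸ LinearMap.range D) := by
    rw [LinearMap.range_eq_top.mpr hΦsurj]
    exact finrank_top ℂ _
  have hfV : Module.finrank ℂ V = M := hVrank M
  have hfW : Module.finrank ℂ W = N := hVrank N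
  refine ⟨?_, hKfin, hker_le, hcoker, ?_⟩
  · -- analytic compatibility
    intro p z
    rw [DLin_apply, Polynomial.eval_finset_sum, Dop]
    apply Finset.sum_congr rfl
    intro j _
    rw [Polynomial.eval_mul, ← eval_iterate_derivative]
  · -- index computation
    rw [hrangeΨ, hkerΨ, hfV] at hrn1
    rw [hkerΦ, hrangeΦ, hfW] at hrn2
    omega
end

section
/- For every function f holomorphic on the cut plane Ω_θ such that D f coincides on Ω_θ with a polynomial, there exists a polynomial p ∈ ℂ[z] such that D(f − p) coincides on Ω_θ with a polynomial of degree < N. -/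
open Complex Polynomial Finset

noncomputable def Dpoly (μ : ℕ) (P : ℕ → Polynomial ℂ) (p : Polynomial ℂ) : Polynomial ℂ :=
  ∑ j ∈ Finset.range (μ + 1), P (μ - j) * (Polynomial.derivative^[j] p)

lemma iterder_add (j : ℕ) (p q : Polynomial ℂ) :
    Polynomial.derivative^[j] (p + q) =
      Polynomial.derivative^[j] p + Polynomial.derivative^[j] q := by
  induction j with
  | zero => simp
  | succ j ih => simp [Function.iterate_succ_apply', ih]

lemma Dpoly_add (μ : ℕ) (P : ℕ → Polynomial ℂ) (p q : Polynomial ℂ) :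
    Dpoly μ P (p + q) = Dpoly μ P p + Dpoly μ P q := by
  simp [Dpoly, iterder_add, mul_add, Finset.sum_add_distrib]

lemma Dpoly_zero (μ : ℕ) (P : ℕ → Polynomial ℂ) : Dpoly μ P 0 = 0 := by
  simp [Dpoly]

lemma Dpoly_C_mul (μ : ℕ) (P : ℕ → Polynomial ℂ) (c : ℂ) (p : Polynomial ℂ) :
    Dpoly μ P (Polynomial.C c * p) = Polynomial.C c * Dpoly μ P p := by
  simp [Dpoly, Polynomial.iterate_derivative_C_mul, Finset.mul_sum]
  exact Finset.sum_congr rfl fun j _ => by ring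

lemma iteratedDeriv_polyEval (j : ℕ) (p : Polynomial ℂ) (z : ℂ) :
    iteratedDeriv j (fun w => p.eval w) z = (Polynomial.derivative^[j] p).eval z := by
  induction j generalizing p z with
  | zero => simp
  | succ j ih =>
    rw [iteratedDeriv_succ']
    have : deriv (fun w => p.eval w) = fun w => (Polynomial.derivative p).eval w := by
      funext w; exact Polynomial.deriv (𝕜 := ℂ) p
    rw [this, ih p.derivative z, Function.iterate_succ_apply]

lemma Dpoly_Xpow_coeff_high (μ δ : ℕ) (P : ℕ → Polynomial ℂ)
    (hdeg : ∀ i, i ≤ μ → ∀ k, δ < k + i → (P i).coeff k = 0)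
    (k m : ℕ) (hm : k + δ < m + μ) :
    (Dpoly μ P (Polynomial.X ^ k)).coeff m = 0 := by
  rw [Dpoly, Polynomial.finset_sum_coeff]
  apply Finset.sum_eq_zero
  intro j hj
  rw [Finset.mem_range] at hj
  rw [Polynomial.iterate_derivative_X_pow_eq_C_mul,
    show P (μ - j) * (Polynomial.C ((k.descFactorial j : ℂ)) * Polynomial.X ^ (k - j))
      = Polynomial.C ((k.descFactorial j : ℂ)) * (P (μ - j) * Polynomial.X ^ (k - j)) by ring,
    Polynomial.coeff_C_mul, Polynomial.coeff_mul_X_pow']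
  by_cases hjk : j ≤ k
  · split_ifs with h
    · rw [hdeg (μ - j) (by omega) (m - (k - j)) (by omega), mul_zero]
    · rw [mul_zero]
  · simp [Nat.descFactorial_eq_zero_iff_lt.mpr (show k < j by omega)]

lemma Dpoly_Xpow_coeff_main (μ δ : ℕ) (P : ℕ → Polynomial ℂ)
    (hdeg : ∀ i, i ≤ μ → ∀ k, δ < k + i → (P i).coeff k = 0)
    (k : ℕ) (hk : μ ≤ k + δ) :
    (Dpoly μ P (Polynomial.X ^ k)).coeff (k + δ - μ) = (Rpoly μ δ P).eval (k : ℂ) := by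
  rw [Dpoly, Polynomial.finset_sum_coeff, Rpoly, Polynomial.eval_finset_sum]
  apply Finset.sum_congr rfl
  intro j hj
  rw [Finset.mem_range] at hj
  rw [Polynomial.iterate_derivative_X_pow_eq_C_mul,
    show P (μ - j) * (Polynomial.C ((k.descFactorial j : ℂ)) * Polynomial.X ^ (k - j))
      = Polynomial.C ((k.descFactorial j : ℂ)) * (P (μ - j) * Polynomial.X ^ (k - j)) by ring,
    Polynomial.coeff_C_mul, Polynomial.coeff_mul_X_pow', Polynomial.eval_mul,
    Polynomial.eval_C, Polynomial.eval_prod]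
  simp only [Polynomial.eval_sub, Polynomial.eval_X, Polynomial.eval_C]
  by_cases hjk : j ≤ k
  · by_cases hμj : μ ≤ δ + j
    · rw [if_pos (by omega)]
      have h1 : k + δ - μ - (k - j) = δ - (μ - j) := by omega
      have h2 : ∏ l ∈ Finset.range j, ((k : ℂ) - (l : ℂ)) = (k.descFactorial j : ℂ) := by
        rw [Nat.descFactorial_eq_prod_range, Nat.cast_prod]
        exact (Finset.prod_congr rfl fun l hl => by
          rw [Finset.mem_range] at hl
          rw [Nat.cast_sub (by omega)]).symm
      rw [h1, h2]; ring
    · have hP : P (μ - j) = 0 :=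
        Polynomial.ext fun m => by
          rw [hdeg (μ - j) (by omega) m (by omega), Polynomial.coeff_zero]
      rw [hP]; simp
  · have h0 : (k.descFactorial j : ℂ) = 0 := by
      rw [Nat.descFactorial_eq_zero_iff_lt.mpr (by omega), Nat.cast_zero]
    rw [h0, Finset.prod_eq_zero (Finset.mem_range.mpr (show k < j by omega))
      (by simp), mul_zero, zero_mul]

lemma reduce_poly (μ δ M N : ℕ) (P : ℕ → Polynomial ℂ)
    (hdeg : ∀ i, i ≤ μ → ∀ k, δ < k + i → (P i).coeff k = 0)
    (hM1 : μ ≤ δ + M)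
    (hM2 : ∀ k : ℕ, M ≤ k → (Rpoly μ δ P).eval (k : ℂ) ≠ 0)
    (hN : N + μ = M + δ) :
    ∀ q : Polynomial ℂ, ∃ p : Polynomial ℂ,
      (q - Dpoly μ P p).degree < (N : WithBot ℕ) := by
  have key : ∀ n : ℕ, ∀ q : Polynomial ℂ, q.natDegree < n → ∃ p : Polynomial ℂ,
      (q - Dpoly μ P p).degree < (N : WithBot ℕ) := by
    intro n
    induction n with
    | zero => intro q h; omega
    | succ n ih =>
      intro q hq
      by_cases hd : q.degree < (N : WithBot ℕ)
      · exact ⟨0, by simpa [Dpoly_zero] using hd⟩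
      · have hq0 : q ≠ 0 := by
          intro h; rw [h] at hd
          exact hd (by rw [Polynomial.degree_zero]; exact WithBot.bot_lt_coe N)
        set d := q.natDegree with hdd
        have hNd : N ≤ d := by
          by_contra h
          exact hd (by rw [Polynomial.degree_eq_natDegree hq0]; exact_mod_cast Nat.lt_of_not_le h)
        set k := d + μ - δ with hkk
        have hk1 : μ ≤ k + δ := by omega
        have hk2 : M ≤ k := by omega
        have hk3 : k + δ - μ = d := by omega
        set c := q.coeff d / (Rpoly μ δ P).eval (k : ℂ) with hcc
        set q' := q - Dpoly μ P (Polynomial.C c * Polynomial.X ^ k) with hq'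
        have hcoeff : ∀ m : ℕ, d ≤ m → q'.coeff m = 0 := by
          intro m hm
          rw [hq', Polynomial.coeff_sub, Dpoly_C_mul, Polynomial.coeff_C_mul]
          rcases eq_or_lt_of_le hm with h | h
          · have hmain := Dpoly_Xpow_coeff_main μ δ P hdeg k hk1
            rw [hk3] at hmain
            rw [← h, hmain, hcc, div_mul_cancel₀ _ (hM2 k hk2), sub_self]
          · rw [Polynomial.coeff_eq_zero_of_natDegree_lt h,
              Dpoly_Xpow_coeff_high μ δ P hdeg k m (by omega), mul_zero, sub_zero]
        have hdeg' : q'.degree < (d : WithBot ℕ) :=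
          (Polynomial.degree_lt_iff_coeff_zero q' d).mpr fun m hm => hcoeff m hm
        by_cases hz : q' = 0
        · refine ⟨Polynomial.C c * Polynomial.X ^ k, ?_⟩
          rw [← hq', hz, Polynomial.degree_zero]
          exact WithBot.bot_lt_coe N
        · have hlt : q'.natDegree < n := by
            have h1 : q'.natDegree < d := (Polynomial.natDegree_lt_iff_degree_lt hz).mpr hdeg'
            omega
          obtain ⟨p', hp'⟩ := ih q' hlt
          refine ⟨Polynomial.C c * Polynomial.X ^ k + p', ?_⟩
          rw [Dpoly_add]
          have : q - (Dpoly μ P (Polynomial.C c * Polynomial.X ^ k) + Dpoly μ P p')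
              = q' - Dpoly μ P p' := by rw [hq']; ring
          rw [this]
          exact hp'
  intro q
  exact key (q.natDegree + 1) q (Nat.lt_succ_self _)

lemma isOpen_cutPlane (S : Set ℂ) (hS : S.Finite) (θ : ℝ) :
    IsOpen (cutPlane S θ) := by
  set e : ℂ := Complex.exp (Complex.I * ((Real.pi - θ : ℝ) : ℂ)) with he
  have heq : cutPlane S θ =
      (⋃ ρ ∈ S, (fun t : ℝ => ρ + (t : ℂ) * e) '' Set.Ici 0)ᶜ := by
    ext z
    constructor
    · intro h hmem
      obtain ⟨ρ, hρ, t, ht, htz⟩ := by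
        simpa only [Set.mem_iUnion, Set.mem_image, Set.mem_Ici, exists_prop] using hmem
      exact h ρ hρ t ht htz.symm
    · intro h ρ hρ t ht hzeq
      exact h (Set.mem_iUnion₂.mpr ⟨ρ, hρ, ⟨t, ht, hzeq.symm⟩⟩)
  rw [heq]
  refine (Set.Finite.isClosed_biUnion hS fun ρ _ => ?_).isOpen_compl
  have habs : ‖e‖ = 1 := by
    rw [he, Complex.norm_exp]
    simp [Complex.mul_re]
  have hiso : Isometry (fun t : ℝ => ρ + (t : ℂ) * e) := by
    apply Isometry.of_dist_eq
    intro t₁ t₂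
    have : (ρ + (t₁ : ℂ) * e) - (ρ + (t₂ : ℂ) * e) = ((t₁ - t₂ : ℝ) : ℂ) * e := by
      push_cast; ring
    rw [Complex.dist_eq, this, norm_mul, habs, mul_one, Complex.norm_real, Real.norm_eq_abs, Real.dist_eq]
  exact hiso.isClosedEmbedding.isClosedMap _ isClosed_Ici

lemma iteratedDerivWithin_isOpen {s : Set ℂ} (hs : IsOpen s) {z : ℂ} (hz : z ∈ s)
    (n : ℕ) (f : ℂ → ℂ) : iteratedDerivWithin n f s z = iteratedDeriv n f z := by
  simp only [iteratedDerivWithin, iteratedDeriv, iteratedFDerivWithin_of_isOpen n hs hz]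

lemma Dop_polyEval (μ : ℕ) (P : ℕ → Polynomial ℂ) (p : Polynomial ℂ) (z : ℂ) :
    Dop μ P (fun w => p.eval w) z = (Dpoly μ P p).eval z := by
  simp [Dop, Dpoly, iteratedDeriv_polyEval, Polynomial.eval_finset_sum]

theorem reduce_degree_below_N'
    (μ δ M N : ℕ) (P : ℕ → Polynomial ℂ) (θ : ℝ)
    (hlead : (P 0).coeff δ ≠ 0)
    (hdeg : ∀ i, i ≤ μ → ∀ k, δ < k + i → (P i).coeff k = 0)
    (hM1 : μ ≤ δ + M)
    (hM2 : ∀ k : ℕ, M ≤ k → (Rpoly μ δ P).eval (k : ℂ) ≠ 0)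
    (hN : N + μ = M + δ)
    (f : ℂ → ℂ)
    (hf : DifferentiableOn ℂ f (cutPlane (Sing (P 0)) θ))
    (hDf : ∃ q : Polynomial ℂ, ∀ z ∈ cutPlane (Sing (P 0)) θ, Dop μ P f z = q.eval z) :
    ∃ (p q : Polynomial ℂ), q.degree < (N : WithBot ℕ) ∧
      ∀ z ∈ cutPlane (Sing (P 0)) θ,
        Dop μ P (fun w => f w - p.eval w) z = q.eval z := by
  obtain ⟨q0, hq0⟩ := hDf
  obtain ⟨p, hp⟩ := reduce_poly μ δ M N P hdeg hM1 hM2 hN q0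
  refine ⟨p, q0 - Dpoly μ P p, hp, ?_⟩
  intro z hz
  have hP0 : P 0 ≠ 0 := fun h => hlead (by simp [h])
  have hSfin : (Sing (P 0)).Finite := Polynomial.finite_setOf_isRoot hP0
  have hΩ : IsOpen (cutPlane (Sing (P 0)) θ) := isOpen_cutPlane _ hSfin θ
  set Ω := cutPlane (Sing (P 0)) θ with hΩdef
  have key : ∀ j : ℕ, iteratedDeriv j (fun w => f w - p.eval w) z
      = iteratedDeriv j f z - iteratedDeriv j (fun w => p.eval w) z := by
    intro j
    have hfc : ContDiffOn ℂ j f Ω := hf.contDiffOn hΩ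
    have hgc : ContDiffOn ℂ j (fun w => p.eval w) Ω :=
      (Polynomial.differentiableOn (p := p)).contDiffOn hΩ
    have hfun : (fun w => f w - p.eval w) = f - (fun w => p.eval w) := rfl
    have hsub := iteratedDerivWithin_sub hz hΩ.uniqueDiffOn (hfc z hz) (hgc z hz)
    rw [iteratedDerivWithin_isOpen hΩ hz, iteratedDerivWithin_isOpen hΩ hz,
      iteratedDerivWithin_isOpen hΩ hz] at hsub
    rw [hfun]
    exact hsub
  have hlin : Dop μ P (fun w => f w - p.eval w) z
      = Dop μ P f z - Dop μ P (fun w => p.eval w) z := by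
    unfold Dop
    rw [← Finset.sum_sub_distrib]
    exact Finset.sum_congr rfl fun j _ => by rw [key j]; ring
  rw [hlin, hq0 z hz, Dop_polyEval, Polynomial.eval_sub]

/-- For any `f` holomorphic on `Ω_θ` with `D f` equal on `Ω_θ` to a polynomial, there is a
polynomial `p` such that `D(f - p)` coincides on `Ω_θ` with a polynomial of degree `< N`. -/
theorem reduce_degree_below_N
    (μ δ M N : ℕ) (P : ℕ → Polynomial ℂ) (θ : ℝ)
    (hμ : 1 ≤ μ)
    (hlead : (P 0).coeff δ ≠ 0)
    (hdeg : ∀ i, i ≤ μ → ∀ k, δ < k + i → (P i).coeff k = 0)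
    (hM1 : μ ≤ δ + M)
    (hM2 : ∀ k : ℕ, M ≤ k → (Rpoly μ δ P).eval (k : ℂ) ≠ 0)
    (hMmin : ∀ M' : ℕ, M' < M →
      ¬ (μ ≤ δ + M' ∧ ∀ k : ℕ, M' ≤ k → (Rpoly μ δ P).eval (k : ℂ) ≠ 0))
    (hN : N + μ = M + δ)
    (hθ : GoodDirection (Sing (P 0)) θ)
    (f : ℂ → ℂ)
    (hf : DifferentiableOn ℂ f (cutPlane (Sing (P 0)) θ))
    (hDf : ∃ q : Polynomial ℂ, ∀ z ∈ cutPlane (Sing (P 0)) θ, Dop μ P f z = q.eval z) :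
    ∃ (p q : Polynomial ℂ), q.degree < (N : WithBot ℕ) ∧
      ∀ z ∈ cutPlane (Sing (P 0)) θ,
        Dop μ P (fun w => f w - p.eval w) z = q.eval z :=
  reduce_degree_below_N' μ δ M N P θ hlead hdeg hM1 hM2 hN f hf hDf
end

section
/- Let α ∈ ℂ with Re α > −1, let i ∈ ℕ, and let z ∈ ℂ with Re z > 0. Then ∫_0^∞ t^α (log t)^i e^{−zt} dt = Σ_{k=0}^{i} C(i,k) · Γ^{(i−k)}(α+1) · (−Log z)^k · exp(−(α+1)·Log z), where Log denotes the principal branch of the complex logarithm and Γ^{(m)} the m-th derivative of the Gamma function; equivalently, the left-hand side equals the i-th derivative at y = α of the function y ↦ Γ(y+1)·exp(−(y+1)·Log z). -/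
open Complex MeasureTheory Set Filter Asymptotics Topology

private lemma norm_cexp_neg_mul (z : ℂ) (t : ℝ) :
    ‖Complex.exp (-z * t)‖ = Real.exp (-z.re * t) := by
  rw [Complex.norm_exp]
  congr 1
  simp [Complex.mul_re]

private lemma integrableOn_rpow_exp {c : ℝ} (hc : 0 < c) {a : ℝ} (ha : -1 < a) :
    IntegrableOn (fun t : ℝ => t ^ a * Real.exp (-c * t)) (Ioi 0) := by
  have := integrableOn_rpow_mul_exp_neg_mul_rpow ha zero_lt_one hc
  simpa [Real.rpow_one] using this

private lemma contOn_cpow (s : ℂ) :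
    ContinuousOn (fun t : ℝ => (t : ℂ) ^ (s - 1)) (Ioi 0) := by
  intro t ht
  exact (continuousAt_ofReal_cpow_const _ _ (Or.inr (ne_of_gt ht))).continuousWithinAt

private lemma integrableOn_cpow_cexp {s z : ℂ} (hs : 0 < s.re) (hz : 0 < z.re) :
    IntegrableOn (fun t : ℝ => (t : ℂ) ^ (s - 1) * Complex.exp (-z * t)) (Ioi 0) := by
  have hbound : IntegrableOn (fun t : ℝ => t ^ (s.re - 1) * Real.exp (-z.re * t)) (Ioi 0) :=
    integrableOn_rpow_exp hz (by linarith)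
  refine hbound.integrable.mono' ?_ ?_
  · refine ((contOn_cpow s).mul ?_).aestronglyMeasurable measurableSet_Ioi
    exact (Complex.continuous_exp.comp ((continuous_const.mul Complex.continuous_ofReal))).continuousOn
  · filter_upwards [ae_restrict_mem measurableSet_Ioi] with t ht
    rw [norm_mul, norm_cexp_neg_mul,
      Complex.norm_cpow_eq_rpow_re_of_pos ht]
    simp [Complex.sub_re]

private lemma laplace_cpow_base {z : ℂ} (hz : 0 < z.re) {s : ℂ} (hs : 0 < s.re) :
    ∫ t in Ioi (0:ℝ), (t : ℂ) ^ (s - 1) * Complex.exp (-z * t)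
      = Complex.Gamma s * Complex.exp (-s * Complex.log z) := by
  set F : ℂ → ℂ := fun w => ∫ t in Ioi (0:ℝ), (t : ℂ) ^ (s - 1) * Complex.exp (-w * t) with hF
  set G : ℂ → ℂ := fun w => Complex.Gamma s * Complex.exp (-s * Complex.log w) with hG
  have hUo : IsOpen {w : ℂ | 0 < w.re} := isOpen_lt continuous_const Complex.continuous_re
  have key : ∀ w : ℂ, 0 < w.re → HasDerivAt F
      (∫ t in Ioi (0:ℝ), (t : ℂ) ^ (s - 1) * (Complex.exp (-w * t) * (-t))) w := by
    intro w hw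
    have hε0 : 0 < w.re / 2 := by positivity
    have := hasDerivAt_integral_of_dominated_loc_of_deriv_le (μ := volume.restrict (Ioi 0))
      (x₀ := w)
      (F := fun (w : ℂ) (t : ℝ) => (t : ℂ) ^ (s - 1) * Complex.exp (-w * t))
      (F' := fun (w : ℂ) (t : ℝ) => (t : ℂ) ^ (s - 1) * (Complex.exp (-w * t) * (-t)))
      (bound := fun t : ℝ => t ^ s.re * Real.exp (-(w.re / 2) * t)) (Metric.ball_mem_nhds w hε0) ?_ ?_ ?_ ?_ ?_ ?_
    · exact this.2
    · refine Eventually.of_forall fun x => ?_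
      refine ((contOn_cpow s).mul ?_).aestronglyMeasurable measurableSet_Ioi
      exact (Complex.continuous_exp.comp
        (continuous_const.mul Complex.continuous_ofReal)).continuousOn
    · exact integrableOn_cpow_cexp hs hw
    · refine ((contOn_cpow s).mul ?_).aestronglyMeasurable measurableSet_Ioi
      refine ((Complex.continuous_exp.comp
        (continuous_const.mul Complex.continuous_ofReal)).mul ?_).continuousOn
      exact (Complex.continuous_ofReal.neg)
    · filter_upwards [ae_restrict_mem measurableSet_Ioi] with t ht
      intro x hx
      have hxre : w.re / 2 ≤ x.re := by
        have h1 : (w - x).re ≤ ‖w - x‖ := Complex.re_le_norm _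
        have h2 : ‖w - x‖ < w.re / 2 := by
          rw [← Complex.dist_eq, dist_comm]
          exact hx
        have : w.re - x.re < w.re / 2 := lt_of_le_of_lt (by simpa using h1) h2
        linarith
      rw [norm_mul, norm_mul, norm_cexp_neg_mul,
        Complex.norm_cpow_eq_rpow_re_of_pos ht, norm_neg,
        Complex.norm_real, Real.norm_eq_abs, abs_of_pos ht]
      have h3 : t ^ (s - 1).re * (Real.exp (-x.re * t) * t)
          = t ^ s.re * Real.exp (-x.re * t) := by
        rw [show (s-1).re = s.re - 1 by simp [Complex.sub_re],
          show s.re = s.re - 1 + 1 by ring, Real.rpow_add ht, Real.rpow_one]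
        ring_nf
      rw [h3]
      have ht' : (0:ℝ) < t := ht
      gcongr
    · exact integrableOn_rpow_exp hε0 (by linarith)
    · filter_upwards [ae_restrict_mem measurableSet_Ioi] with t _
      intro x _
      have h1 : HasDerivAt (fun x : ℂ => Complex.exp (-x * t))
          (Complex.exp (-x * t) * (-1 * t)) x :=
        (((hasDerivAt_id x).neg.mul_const (t:ℂ)).cexp)
      have := h1.const_mul ((t:ℂ) ^ (s - 1))
      exact this.congr_deriv (by ring)
  have hFd : DifferentiableOn ℂ F {w : ℂ | 0 < w.re} :=
    fun w hw => ((key w hw).differentiableAt).differentiableWithinAt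
  have hGd : DifferentiableOn ℂ G {w : ℂ | 0 < w.re} := by
    intro w hw
    refine DifferentiableAt.differentiableWithinAt ?_
    have hl : DifferentiableAt ℂ Complex.log w :=
      Complex.differentiableAt_log (Complex.mem_slitPlane_iff.2 (Or.inl hw))
    exact ((hl.const_mul (-s)).cexp).const_mul _
  have hFa : AnalyticOnNhd ℂ F {w : ℂ | 0 < w.re} := hFd.analyticOnNhd hUo
  have hGa : AnalyticOnNhd ℂ G {w : ℂ | 0 < w.re} := hGd.analyticOnNhd hUo
  have hreal : ∀ r : ℝ, 0 < r → F r = G r := by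
    intro r hr
    have hrne : (r:ℂ) ≠ 0 := Complex.ofReal_ne_zero.2 hr.ne'
    have h0 := integral_cpow_mul_exp_neg_mul_Ioi hs hr
    have h1 : F r = (1 / (r:ℂ)) ^ s * Complex.Gamma s := by
      rw [hF, ← h0]
      simp only [neg_mul]
    rw [h1, hG]
    show _ = Complex.Gamma s * Complex.exp (-s * Complex.log (r:ℂ))
    rw [one_div, ← Complex.ofReal_inv,
      Complex.cpow_def_of_ne_zero (Complex.ofReal_ne_zero.2 (by positivity)),
      ← Complex.ofReal_log (by positivity : (0:ℝ) ≤ r⁻¹), Real.log_inv,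
      ← Complex.ofReal_log hr.le,
      show ((-Real.log r : ℝ) : ℂ) * s = -s * ((Real.log r : ℝ) : ℂ) by push_cast; ring]
    ring
  have hfreq : ∃ᶠ w in 𝓝[≠] (1:ℂ), F w = G w := by
    have htend : Tendsto (fun n : ℕ => ((1 + ((n:ℝ)+1)⁻¹ : ℝ) : ℂ)) atTop (𝓝[≠] (1:ℂ)) := by
      rw [tendsto_nhdsWithin_iff]
      constructor
      · have h2 : Tendsto (fun n : ℕ => (1 + ((n:ℝ)+1)⁻¹ : ℝ)) atTop (𝓝 1) := by
          have h3 : Tendsto (fun n : ℕ => (((n:ℝ)+1)⁻¹ : ℝ)) atTop (𝓝 0) := by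
            exact tendsto_one_div_add_atTop_nhds_zero_nat.congr fun n => one_div _
          simpa using (tendsto_const_nhds : Tendsto (fun _ : ℕ => (1:ℝ)) atTop (𝓝 1)).add h3
        exact (Complex.continuous_ofReal.tendsto 1).comp h2
      · refine Eventually.of_forall fun n => ?_
        simp only [mem_compl_iff, mem_singleton_iff]
        intro h
        have h4 : (1 + ((n:ℝ)+1)⁻¹ : ℝ) = 1 := by exact_mod_cast h
        have h5 : (0:ℝ) < ((n:ℝ)+1)⁻¹ := by positivity
        linarith
    exact htend.frequently (Frequently.of_forall fun n => hreal _ (by positivity))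
  have heq := hFa.eqOn_of_preconnected_of_frequently_eq hGa
      (convex_halfSpace_re_gt 0).isPreconnected
      (by norm_num [Set.mem_setOf_eq, Complex.one_re] : (1:ℂ) ∈ {w : ℂ | 0 < w.re}) hfreq
  exact heq hz

private lemma norm_logpow_cexp (z : ℂ) (j : ℕ) (t : ℝ) :
    ‖(Real.log t : ℂ)^j * Complex.exp (-z * t)‖ = |Real.log t|^j * Real.exp (-z.re * t) := by
  rw [norm_mul, norm_pow, Complex.norm_real, Real.norm_eq_abs, norm_cexp_neg_mul]

private lemma logpow_cexp_locInt (z : ℂ) (j : ℕ) :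
    LocallyIntegrableOn (fun t : ℝ => (Real.log t : ℂ)^j * Complex.exp (-z * t)) (Ioi 0) := by
  refine ContinuousOn.locallyIntegrableOn ?_ measurableSet_Ioi
  refine ContinuousOn.mul ?_ ?_
  · exact (Complex.continuous_ofReal.comp_continuousOn
      (Real.continuousOn_log.mono fun t ht => ne_of_gt ht)).pow j
  · exact (Complex.continuous_exp.comp (continuous_const.mul Complex.continuous_ofReal)).continuousOn

private lemma logpow_cexp_isBigO_top {z : ℂ} (hz : 0 < z.re) (j : ℕ) (a : ℝ) :
    (fun t : ℝ => (Real.log t : ℂ)^j * Complex.exp (-z * t)) =O[atTop] (fun t => t ^ (-a)) := by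
  have h1 : (fun t : ℝ => t ^ (j:ℝ) * Real.exp (-z.re * t)) =o[atTop] (fun t : ℝ => t ^ (-a)) := by
    have h2 := isLittleO_exp_neg_mul_rpow_atTop hz (-a - j)
    have h3 := (isBigO_refl (fun t : ℝ => t ^ (j:ℝ)) atTop).mul_isLittleO h2
    refine h3.congr' EventuallyEq.rfl ?_
    filter_upwards [eventually_gt_atTop (0:ℝ)] with t ht
    rw [← Real.rpow_add ht]
    ring_nf
  refine (IsBigO.of_bound 1 ?_).trans h1.isBigO
  filter_upwards [eventually_ge_atTop (1:ℝ)] with t ht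
  have ht0 : (0:ℝ) < t := by linarith
  have hlog : |Real.log t| ≤ t := by
    rw [_root_.abs_of_nonneg (Real.log_nonneg ht)]
    exact (Real.log_le_sub_one_of_pos ht0).trans (by linarith)
  rw [one_mul, norm_logpow_cexp, Real.norm_eq_abs]
  have hrhs : |t ^ (j:ℝ) * Real.exp (-z.re * t)| = t ^ (j:ℝ) * Real.exp (-z.re * t) := by
    rw [_root_.abs_of_nonneg]
    positivity
  rw [hrhs, Real.rpow_natCast]
  gcongr

private lemma logpow_cexp_isBigO_bot {z : ℂ} (hz : 0 < z.re) (j : ℕ) {b : ℝ} (hb : 0 < b) :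
    (fun t : ℝ => (Real.log t : ℂ)^j * Complex.exp (-z * t)) =O[𝓝[>] (0:ℝ)]
      (fun t => t ^ (-b)) := by
  have h1 : (fun t : ℝ => |Real.log t| ^ (j:ℝ)) =o[𝓝[>] (0:ℝ)] (fun t : ℝ => t ^ (-b)) :=
    isLittleO_abs_log_rpow_rpow_nhdsGT_zero _ (neg_lt_zero.2 hb)
  refine (IsBigO.of_bound 1 ?_).trans h1.isBigO
  filter_upwards [self_mem_nhdsWithin] with t ht
  have ht0 : (0:ℝ) < t := ht
  rw [one_mul, norm_logpow_cexp, Real.norm_eq_abs,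
    _root_.abs_of_nonneg (Real.rpow_nonneg (abs_nonneg _) _), Real.rpow_natCast]
  have hexp : Real.exp (-z.re * t) ≤ 1 := by
    rw [Real.exp_le_one_iff]
    nlinarith
  calc |Real.log t|^j * Real.exp (-z.re * t) ≤ |Real.log t|^j * 1 := by gcongr
  _ = |Real.log t|^j := mul_one _

private lemma mellin_logpow_hasDeriv {z : ℂ} (hz : 0 < z.re) (j : ℕ) {s : ℂ} (hs : 0 < s.re) :
    HasDerivAt (mellin (fun t : ℝ => (Real.log t : ℂ)^j * Complex.exp (-z * t)))
      (mellin (fun t : ℝ => (Real.log t : ℂ)^(j+1) * Complex.exp (-z * t)) s) s := by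
  have h := (mellin_hasDerivAt_of_isBigO_rpow (a := s.re + 1) (b := s.re / 2)
    (logpow_cexp_locInt z j) (logpow_cexp_isBigO_top hz j _) (by linarith)
    (logpow_cexp_isBigO_bot hz j (by linarith)) (by linarith)).2
  have heq : (fun t : ℝ => Real.log t • ((Real.log t : ℂ)^j * Complex.exp (-z * t)))
      = fun t : ℝ => (Real.log t : ℂ)^(j+1) * Complex.exp (-z * t) := by
    funext t
    rw [Complex.real_smul, pow_succ]
    ring
  rwa [heq] at h

private lemma gamma_analytic : AnalyticOnNhd ℂ Complex.Gamma {w : ℂ | 0 < w.re} := by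
  have hUo : IsOpen {w : ℂ | 0 < w.re} := isOpen_lt continuous_const Complex.continuous_re
  refine DifferentiableOn.analyticOnNhd (fun w hw => ?_) hUo
  refine (Complex.differentiableAt_Gamma w fun m => ?_).differentiableWithinAt
  intro h
  have hw' : (0:ℝ) < w.re := hw
  rw [h] at hw'
  simp only [Complex.neg_re, Complex.natCast_re] at hw'
  have : (0:ℝ) ≤ (m:ℝ) := Nat.cast_nonneg m
  linarith

private lemma gamma_iter_analytic (n : ℕ) :
    AnalyticOnNhd ℂ (iteratedDeriv n Complex.Gamma) {w : ℂ | 0 < w.re} := by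
  induction n with
  | zero => simpa [iteratedDeriv_zero] using gamma_analytic
  | succ n ih =>
    rw [iteratedDeriv_succ]
    exact ih.deriv

private lemma pascal_step (D : ℕ → ℂ) (u E : ℂ) (i : ℕ) :
    ∑ k ∈ Finset.range (i + 1), (Nat.choose i k : ℂ) *
        (D (i - k + 1) * u ^ k + D (i - k) * u ^ (k + 1)) * E
      = ∑ k ∈ Finset.range (i + 1 + 1), (Nat.choose (i+1) k : ℂ) * D (i + 1 - k) * u ^ k * E := by
  have hA : ∑ k ∈ Finset.range (i + 1), (Nat.choose i k : ℂ) * (D (i - k + 1) * u ^ k) * E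
      = (∑ k ∈ Finset.range (i + 1), (Nat.choose i (k+1) : ℂ) * (D (i - k) * u ^ (k+1)) * E)
        + D (i + 1) * E := by
    rw [Finset.sum_range_succ' (fun k => (Nat.choose i k : ℂ) * (D (i - k + 1) * u ^ k) * E) i]
    rw [Finset.sum_range_succ (fun k => (Nat.choose i (k+1) : ℂ) * (D (i - k) * u ^ (k+1)) * E) i]
    simp only [Nat.choose_succ_self, Nat.cast_zero, Nat.choose_zero_right, Nat.cast_one,
      Nat.sub_zero, pow_zero]
    have hidx : ∀ k ∈ Finset.range i,
        (Nat.choose i (k+1) : ℂ) * (D (i - (k+1) + 1) * u ^ (k+1)) * E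
          = (Nat.choose i (k+1) : ℂ) * (D (i - k) * u ^ (k+1)) * E := by
      intro k hk
      have hk' : k < i := Finset.mem_range.1 hk
      have : i - (k+1) + 1 = i - k := by omega
      rw [this]
    rw [Finset.sum_congr rfl hidx]
    ring
  have hRHS : ∑ k ∈ Finset.range (i + 1 + 1), (Nat.choose (i+1) k : ℂ) * D (i + 1 - k) * u ^ k * E
      = (∑ k ∈ Finset.range (i + 1),
          ((Nat.choose i k : ℂ) + (Nat.choose i (k+1) : ℂ)) * D (i - k) * u ^ (k+1) * E)
        + D (i + 1) * E := by
    rw [Finset.sum_range_succ' (fun k => (Nat.choose (i+1) k : ℂ) * D (i + 1 - k) * u ^ k * E) (i+1)]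
    have hidx : ∀ k ∈ Finset.range (i+1),
        (Nat.choose (i+1) (k+1) : ℂ) * D (i + 1 - (k+1)) * u ^ (k+1) * E
          = ((Nat.choose i k : ℂ) + (Nat.choose i (k+1) : ℂ)) * D (i - k) * u ^ (k+1) * E := by
      intro k hk
      have h1 : i + 1 - (k+1) = i - k := by omega
      have h2 : Nat.choose (i+1) (k+1) = Nat.choose i k + Nat.choose i (k+1) :=
        Nat.choose_succ_succ i k
      rw [h1, h2]
      push_cast
      ring
    rw [Finset.sum_congr rfl hidx]
    simp
  rw [hRHS]
  have hLHS : ∑ k ∈ Finset.range (i + 1), (Nat.choose i k : ℂ) *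
        (D (i - k + 1) * u ^ k + D (i - k) * u ^ (k + 1)) * E
      = (∑ k ∈ Finset.range (i + 1), (Nat.choose i k : ℂ) * (D (i - k + 1) * u ^ k) * E)
        + ∑ k ∈ Finset.range (i + 1), (Nat.choose i k : ℂ) * (D (i - k) * u ^ (k+1)) * E := by
    rw [← Finset.sum_add_distrib]
    refine Finset.sum_congr rfl fun k _ => ?_
    ring
  rw [hLHS, hA, add_right_comm, ← Finset.sum_add_distrib]
  have : ∀ k ∈ Finset.range (i+1),
      (Nat.choose i (k+1) : ℂ) * (D (i - k) * u ^ (k+1)) * E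
        + (Nat.choose i k : ℂ) * (D (i - k) * u ^ (k+1)) * E
      = ((Nat.choose i k : ℂ) + (Nat.choose i (k+1) : ℂ)) * D (i - k) * u ^ (k+1) * E := by
    intro k _
    ring
  rw [Finset.sum_congr rfl this]

private lemma iter_gamma_exp {z : ℂ} (i : ℕ) :
    ∀ s : ℂ, 0 < s.re →
    iteratedDeriv i (fun y : ℂ => Complex.Gamma y * Complex.exp (-y * Complex.log z)) s
      = ∑ k ∈ Finset.range (i + 1), (Nat.choose i k : ℂ) * iteratedDeriv (i - k) Complex.Gamma s
          * (-(Complex.log z)) ^ k * Complex.exp (-s * Complex.log z) := by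
  have hUo : IsOpen {w : ℂ | 0 < w.re} := isOpen_lt continuous_const Complex.continuous_re
  induction i with
  | zero => intro s hs; simp
  | succ i ih =>
    intro s hs
    rw [iteratedDeriv_succ]
    have hev : iteratedDeriv i (fun y : ℂ => Complex.Gamma y * Complex.exp (-y * Complex.log z))
        =ᶠ[𝓝 s] (fun y => ∑ k ∈ Finset.range (i + 1), (Nat.choose i k : ℂ)
          * iteratedDeriv (i - k) Complex.Gamma y * (-(Complex.log z)) ^ k
          * Complex.exp (-y * Complex.log z)) := by
      filter_upwards [hUo.mem_nhds hs] with y hy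
      exact ih y hy
    rw [hev.deriv_eq]
    have hterm : ∀ k ∈ Finset.range (i+1), HasDerivAt (fun y : ℂ =>
        (Nat.choose i k : ℂ) * iteratedDeriv (i - k) Complex.Gamma y * (-(Complex.log z)) ^ k
          * Complex.exp (-y * Complex.log z))
        ((Nat.choose i k : ℂ) * (iteratedDeriv (i - k + 1) Complex.Gamma s
              * (-(Complex.log z)) ^ k
            + iteratedDeriv (i - k) Complex.Gamma s * (-(Complex.log z)) ^ (k+1))
          * Complex.exp (-s * Complex.log z)) s := by
      intro k hk
      have hD : HasDerivAt (iteratedDeriv (i - k) Complex.Gamma)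
          (iteratedDeriv (i - k + 1) Complex.Gamma s) s := by
        have hdiff : DifferentiableAt ℂ (iteratedDeriv (i - k) Complex.Gamma) s :=
          ((gamma_iter_analytic (i - k)) s hs).differentiableAt
        have h2 := hdiff.hasDerivAt
        rwa [← iteratedDeriv_succ] at h2
      have hE : HasDerivAt (fun y : ℂ => Complex.exp (-y * Complex.log z))
          (Complex.exp (-s * Complex.log z) * (-1 * Complex.log z)) s :=
        ((hasDerivAt_id s).neg.mul_const _).cexp
      have h3 := ((hD.const_mul ((Nat.choose i k : ℂ))).mul_const
          ((-(Complex.log z)) ^ k)).mul hE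
      exact h3.congr_deriv (by ring)
    have hsum := HasDerivAt.fun_sum hterm
    rw [hsum.deriv]
    exact pascal_step (fun m => iteratedDeriv m Complex.Gamma s) (-(Complex.log z))
      (Complex.exp (-s * Complex.log z)) i

/-- Watson-type formula: for `Re α > -1` and `Re z > 0`,
`∫₀^∞ t^α (log t)^i e^{-zt} dt = ∑_{k=0}^i C(i,k) Γ^{(i-k)}(α+1) (-Log z)^k e^{-(α+1) Log z}`. -/
theorem laplace_of_log_power
    (α z : ℂ) (i : ℕ) (hα : -1 < α.re) (hz : 0 < z.re) :
    (∫ t in Set.Ioi (0 : ℝ),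
        Complex.exp (α * (Real.log t : ℂ)) * ((Real.log t : ℂ)) ^ i *
          Complex.exp (-z * (t : ℂ)))
      = ∑ k ∈ Finset.range (i + 1),
          (Nat.choose i k : ℂ) * iteratedDeriv (i - k) Complex.Gamma (α + 1) *
            (-(Complex.log z)) ^ k * Complex.exp (-(α + 1) * Complex.log z) := by
  have hUo : IsOpen {w : ℂ | 0 < w.re} := isOpen_lt continuous_const Complex.continuous_re
  have hα1 : 0 < (α + 1).re := by
    rw [Complex.add_re, Complex.one_re]; linarith
  have hmel : (∫ t in Set.Ioi (0 : ℝ),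
        Complex.exp (α * (Real.log t : ℂ)) * ((Real.log t : ℂ)) ^ i * Complex.exp (-z * (t:ℂ)))
      = mellin (fun t : ℝ => (Real.log t : ℂ)^i * Complex.exp (-z * t)) (α + 1) := by
    simp only [mellin]
    refine setIntegral_congr_fun measurableSet_Ioi fun t ht => ?_
    have ht' : (0:ℝ) < t := ht
    rw [smul_eq_mul, add_sub_cancel_right,
      Complex.cpow_def_of_ne_zero (Complex.ofReal_ne_zero.2 (ne_of_gt ht')),
      ← Complex.ofReal_log (le_of_lt ht'), mul_comm ((Real.log t : ℝ) : ℂ) α]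
    ring
  have hiter : ∀ (j : ℕ), ∀ s : ℂ, 0 < s.re →
      mellin (fun t : ℝ => (Real.log t : ℂ)^j * Complex.exp (-z * t)) s
        = iteratedDeriv j
            (mellin (fun t : ℝ => (Real.log t : ℂ)^0 * Complex.exp (-z * t))) s := by
    intro j
    induction j with
    | zero => intro s hs; rw [iteratedDeriv_zero]
    | succ j ih =>
      intro s hs
      rw [iteratedDeriv_succ]
      have hev : (fun y => mellin (fun t : ℝ => (Real.log t : ℂ)^j * Complex.exp (-z * t)) y)
          =ᶠ[𝓝 s] iteratedDeriv j
            (mellin (fun t : ℝ => (Real.log t : ℂ)^0 * Complex.exp (-z * t))) := by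
        filter_upwards [hUo.mem_nhds hs] with y hy
        exact ih y hy
      rw [← hev.deriv_eq, (mellin_logpow_hasDeriv hz j hs).deriv]
  have hM0 : Set.EqOn (mellin (fun t : ℝ => (Real.log t : ℂ)^0 * Complex.exp (-z * t)))
      (fun s => Complex.Gamma s * Complex.exp (-s * Complex.log z)) {w : ℂ | 0 < w.re} := by
    intro s hs
    have hs' : 0 < s.re := hs
    simp only [mellin, pow_zero, one_mul, smul_eq_mul]
    exact laplace_cpow_base hz hs'
  have hev2 : mellin (fun t : ℝ => (Real.log t : ℂ)^0 * Complex.exp (-z * t))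
      =ᶠ[𝓝 (α+1)] (fun s => Complex.Gamma s * Complex.exp (-s * Complex.log z)) :=
    Filter.eventuallyEq_of_mem (hUo.mem_nhds hα1) hM0
  rw [hmel, hiter i (α+1) hα1, hev2.iteratedDeriv_eq i, iter_gamma_exp i (α+1) hα1]
end

section
/- For every real x > 0, ∫_0^∞ e^{−t}/(x+t) dt = −e^x · ( Σ_{n=1}^{∞} (−1)^n x^n/(n·n!) + log x + γ ), where γ is the Euler–Mascheroni constant. (For x = 1 the left-hand side is Gompertz's constant.) -/
open MeasureTheory Set Filter Topology

namespace GompertzAux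

noncomputable def S (x : ℝ) : ℝ :=
  ∑' n : ℕ, (-1 : ℝ) ^ (n + 1) * x ^ (n + 1) /
    ((n + 1 : ℝ) * (Nat.factorial (n + 1) : ℝ))

noncomputable def F (x : ℝ) : ℝ := ∫ t in Ioi (0:ℝ), Real.exp (-t) / (x + t)

noncomputable def Phi (x : ℝ) : ℝ := ∫ t in Ioi (0:ℝ), Real.exp (-t) * Real.log (x + t)

lemma integrable_exp_neg : IntegrableOn (fun t : ℝ => Real.exp (-t)) (Ioi 0) := by
  simpa using exp_neg_integrableOn_Ioi 0 one_pos

lemma integrable_mul_exp_neg : IntegrableOn (fun t : ℝ => t * Real.exp (-t)) (Ioi 0) := by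
  have h := Real.GammaIntegral_convergent (by norm_num : (0:ℝ) < 2)
  apply h.congr_fun ?_ measurableSet_Ioi
  intro t ht
  norm_num [Real.rpow_one, mul_comm]

lemma mellin_aux :
    MellinConvergent (fun t : ℝ => Real.log t • ((Real.exp (-t) : ℂ))) 1 ∧
      HasDerivAt (mellin fun t : ℝ => ((Real.exp (-t) : ℂ)))
        (mellin (fun t : ℝ => Real.log t • ((Real.exp (-t)) : ℂ)) 1) 1 := by
  refine mellin_hasDerivAt_of_isBigO_rpow (a := 2) (b := 0) ?_ ?_ (by norm_num) ?_ (by norm_num)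
  · refine (Continuous.continuousOn ?_).locallyIntegrableOn measurableSet_Ioi
    exact Complex.continuous_ofReal.comp (Real.continuous_exp.comp continuous_neg)
  · rw [← Asymptotics.isBigO_norm_left]
    simp_rw [Complex.norm_real,
      Asymptotics.isBigO_norm_left]
    simpa only [neg_one_mul] using
      (isLittleO_exp_neg_mul_rpow_atTop zero_lt_one _).isBigO
  · simp_rw [neg_zero, Real.rpow_zero]
    refine Asymptotics.isBigO_const_of_tendsto (?_ : Tendsto _ _ (𝓝 (1 : ℂ))) one_ne_zero
    rw [(by simp : (1 : ℂ) = Real.exp (-0))]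
    exact (Complex.continuous_ofReal.comp
      (Real.continuous_exp.comp continuous_neg)).continuousWithinAt

lemma lemA_int : IntegrableOn (fun t : ℝ => Real.exp (-t) * Real.log t) (Ioi 0) := by
  have h := mellin_aux.1
  unfold MellinConvergent at h
  have h2 : IntegrableOn (fun t : ℝ => ((Real.exp (-t) * Real.log t : ℝ) : ℂ)) (Ioi 0) := by
    apply h.congr_fun ?_ measurableSet_Ioi
    intro t ht
    simp [Complex.real_smul, mul_comm]
  exact (h2.re).congr (Eventually.of_forall fun t => by simp only [RCLike.re_to_complex, Complex.ofReal_re])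

lemma lemA : (∫ t in Ioi (0:ℝ), Real.exp (-t) * Real.log t)
    = -Real.eulerMascheroniConstant := by
  set d : ℂ := ∫ t : ℝ in Ioi 0, (t : ℂ) ^ ((1:ℂ) - 1) * (Real.log t * Real.exp (-t)) with hd
  have h1 : HasDerivAt Complex.GammaIntegral d 1 :=
    Complex.hasDerivAt_GammaIntegral (by norm_num)
  have heq : Complex.Gamma =ᶠ[𝓝 (1:ℂ)] Complex.GammaIntegral := by
    refine eventually_of_mem ((isOpen_lt continuous_const Complex.continuous_re).mem_nhds
      (by norm_num : (0:ℝ) < (1:ℂ).re)) fun s hs => Complex.Gamma_eq_integral hs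
  have h2 : HasDerivAt Complex.Gamma d 1 := h1.congr_of_eventuallyEq heq
  have h3 : HasDerivAt Real.Gamma d.re 1 := by
    have := h2.real_of_complex
    refine this.congr_of_eventuallyEq (Eventually.of_forall fun y => ?_)
    simp only [Complex.Gamma_ofReal, Complex.ofReal_re]
  have h4 : d.re = -Real.eulerMascheroniConstant :=
    h3.unique Real.hasDerivAt_Gamma_one
  have h5 : d = ((∫ t in Ioi (0:ℝ), Real.exp (-t) * Real.log t : ℝ) : ℂ) := by
    have : ((∫ t in Ioi (0:ℝ), Real.exp (-t) * Real.log t : ℝ) : ℂ)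
        = ∫ t in Ioi (0:ℝ), ((Real.exp (-t) * Real.log t : ℝ) : ℂ) := integral_ofReal.symm
    rw [hd, this]
    refine setIntegral_congr_fun measurableSet_Ioi fun t ht => ?_
    rw [sub_self, Complex.cpow_zero, one_mul, Complex.ofReal_mul, mul_comm]
  rw [h5, Complex.ofReal_re] at h4
  exact h4


lemma log_bound {B x t : ℝ} (hB : 1 ≤ B) (hx0 : 0 ≤ x) (hxB : x ≤ B) (ht : 0 < t) :
    |Real.log (x + t)| ≤ |Real.log t| + Real.log B + t := by
  have hxt : 0 < x + t := by linarith
  have h1 : Real.log (x + t) ≤ Real.log B + t := by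
    have hle : x + t ≤ B * (1 + t) := by nlinarith
    calc Real.log (x + t) ≤ Real.log (B * (1 + t)) :=
          Real.log_le_log hxt hle
      _ = Real.log B + Real.log (1 + t) := Real.log_mul (by linarith) (by linarith)
      _ ≤ Real.log B + t := by
          have := Real.log_le_sub_one_of_pos (show (0:ℝ) < 1 + t by linarith)
          linarith
  have h2 : Real.log t ≤ Real.log (x + t) := Real.log_le_log ht (by linarith)
  have hB0 : 0 ≤ Real.log B := Real.log_nonneg hB
  rw [abs_le]
  constructor
  · have := neg_abs_le (Real.log t)
    linarith
  · have h3 := le_abs_self (Real.log t)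
    have h4 := abs_nonneg (Real.log t)
    linarith

noncomputable def gbound (B : ℝ) (t : ℝ) : ℝ :=
  Real.exp (-t) * |Real.log t| + Real.log B * Real.exp (-t) + t * Real.exp (-t)

lemma gbound_integrable (B : ℝ) : IntegrableOn (gbound B) (Ioi 0) := by
  refine Integrable.add (Integrable.add ?_ ?_) ?_
  · refine lemA_int.abs.congr (Eventually.of_forall fun t => ?_)
    show |Real.exp (-t) * Real.log t| = _
    rw [abs_mul, abs_of_pos (Real.exp_pos _)]
  · exact integrable_exp_neg.const_mul _
  · exact integrable_mul_exp_neg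

lemma gbound_spec {B x t : ℝ} (hB : 1 ≤ B) (hx0 : 0 ≤ x) (hxB : x ≤ B) (ht : 0 < t) :
    ‖Real.exp (-t) * Real.log (x + t)‖ ≤ gbound B t := by
  rw [Real.norm_eq_abs, abs_mul, abs_of_pos (Real.exp_pos _), gbound]
  have h := log_bound hB hx0 hxB ht
  have he := (Real.exp_pos (-t)).le
  nlinarith [abs_nonneg (Real.log (x + t))]

lemma integrable_log_int {x : ℝ} (hx : 0 ≤ x) :
    IntegrableOn (fun t : ℝ => Real.exp (-t) * Real.log (x + t)) (Ioi 0) := by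
  rcases hx.eq_or_lt with h | h
  · refine lemA_int.congr_fun (fun t ht => ?_) measurableSet_Ioi
    rw [← h, zero_add]
  · set B := max 1 x with hB
    refine Integrable.mono' (gbound_integrable B) ?_ ?_
    · refine (ContinuousOn.aestronglyMeasurable ?_ measurableSet_Ioi)
      refine ContinuousOn.mul (Continuous.continuousOn (by continuity)) ?_
      refine ContinuousOn.log (Continuous.continuousOn (by continuity)) ?_
      intro t ht; exact ne_of_gt (by simp only [mem_Ioi] at ht; linarith)
    · rw [ae_restrict_iff' measurableSet_Ioi]
      exact ae_of_all _ fun t ht =>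
        gbound_spec (le_max_left _ _) hx (le_max_right _ _) ht

lemma integrable_one {x : ℝ} (hx : 0 < x) :
    IntegrableOn (fun t : ℝ => Real.exp (-t) / (x + t)) (Ioi 0) := by
  refine Integrable.mono' (integrable_exp_neg.div_const x) ?_ ?_
  · refine ContinuousOn.aestronglyMeasurable ?_ measurableSet_Ioi
    refine ContinuousOn.div (Continuous.continuousOn (by continuity))
      (Continuous.continuousOn (by continuity)) ?_
    intro t ht; simp only [mem_Ioi] at ht; positivity
  · rw [ae_restrict_iff' measurableSet_Ioi]
    refine ae_of_all _ fun t ht => ?_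
    simp only [mem_Ioi] at ht
    rw [Real.norm_eq_abs, abs_of_pos (by positivity)]
    gcongr
    linarith

lemma integrable_two {x : ℝ} (hx : 0 < x) :
    IntegrableOn (fun t : ℝ => Real.exp (-t) / (x + t) ^ 2) (Ioi 0) := by
  refine Integrable.mono' (integrable_exp_neg.div_const (x ^ 2)) ?_ ?_
  · refine ContinuousOn.aestronglyMeasurable ?_ measurableSet_Ioi
    refine ContinuousOn.div (Continuous.continuousOn (by continuity))
      (Continuous.continuousOn (by continuity)) ?_
    intro t ht; simp only [mem_Ioi] at ht; positivity
  · rw [ae_restrict_iff' measurableSet_Ioi]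
    refine ae_of_all _ fun t ht => ?_
    simp only [mem_Ioi] at ht
    rw [Real.norm_eq_abs, abs_of_pos (by positivity)]
    gcongr
    all_goals first | positivity | linarith


lemma tendsto_exp_log_atTop {x : ℝ} (hx : 0 < x) :
    Tendsto (fun t : ℝ => Real.exp (-t) * Real.log (x + t)) atTop (𝓝 0) := by
  have hg : Tendsto (fun t : ℝ => x * Real.exp (-t) + t * Real.exp (-t)) atTop (𝓝 0) := by
    have h1 : Tendsto (fun t : ℝ => x * Real.exp (-t)) atTop (𝓝 0) := by
      simpa using (Real.tendsto_exp_neg_atTop_nhds_zero).const_mul x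
    have h2 : Tendsto (fun t : ℝ => t * Real.exp (-t)) atTop (𝓝 0) := by
      simpa [mul_comm] using Real.tendsto_pow_mul_exp_neg_atTop_nhds_zero 1
    simpa using h1.add h2
  refine squeeze_zero_norm' ?_ hg
  filter_upwards [eventually_ge_atTop (1 : ℝ)] with t ht
  have hxt : (1:ℝ) ≤ x + t := by linarith
  have hlog : 0 ≤ Real.log (x + t) := Real.log_nonneg hxt
  have hlog2 : Real.log (x + t) ≤ x + t := by
    have := Real.log_le_sub_one_of_pos (show (0:ℝ) < x + t by linarith)
    linarith
  rw [Real.norm_eq_abs, abs_mul, abs_of_pos (Real.exp_pos _), abs_of_nonneg hlog]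
  calc Real.exp (-t) * Real.log (x + t) ≤ Real.exp (-t) * (x + t) := by
        gcongr
    _ = x * Real.exp (-t) + t * Real.exp (-t) := by ring


lemma parts1 {x : ℝ} (hx : 0 < x) : Phi x = F x + Real.log x := by
  have key : ∫ t in Ioi (0:ℝ),
      (Real.exp (-t) / (x + t) - Real.exp (-t) * Real.log (x + t))
      = 0 - Real.exp (-(0:ℝ)) * Real.log (x + 0) := by
    refine integral_Ioi_of_hasDerivAt_of_tendsto'
      (f := fun t => Real.exp (-t) * Real.log (x + t)) (fun t ht => ?_)
      ((integrable_one hx).sub (integrable_log_int hx.le)) (tendsto_exp_log_atTop hx)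
    have hxt : 0 < x + t := by simp only [mem_Ici] at ht; linarith
    have h1 : HasDerivAt (fun t : ℝ => Real.exp (-t)) (-Real.exp (-t)) t := by
      simpa [Function.comp_def] using ((Real.hasDerivAt_exp (-t)).comp t ((hasDerivAt_id t).neg))
    have h2 : HasDerivAt (fun t : ℝ => Real.log (x + t)) ((x + t)⁻¹) t := by
      simpa [Function.comp_def] using ((Real.hasDerivAt_log (ne_of_gt hxt)).comp t
        ((hasDerivAt_id t).const_add x))
    refine (h1.fun_mul h2).congr_deriv ?_
    field_simp
    ring
  rw [integral_sub (integrable_one hx) (integrable_log_int hx.le)] at key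
  have : Real.exp (-(0:ℝ)) = 1 := by norm_num
  rw [add_zero, this, one_mul] at key
  have hF : (∫ t in Ioi (0:ℝ), Real.exp (-t) / (x + t)) = F x := rfl
  have hP : (∫ t in Ioi (0:ℝ), Real.exp (-t) * Real.log (x + t)) = Phi x := rfl
  rw [hF, hP] at key
  linarith [key]

lemma parts2 {x : ℝ} (hx : 0 < x) :
    (∫ t in Ioi (0:ℝ), Real.exp (-t) / (x + t) ^ 2) = 1 / x - F x := by
  have key : ∫ t in Ioi (0:ℝ),
      (Real.exp (-t) / (x + t) + Real.exp (-t) / (x + t) ^ 2)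
      = 0 - (-(Real.exp (-(0:ℝ)) / (x + 0))) := by
    refine integral_Ioi_of_hasDerivAt_of_tendsto'
      (f := fun t => -(Real.exp (-t) / (x + t))) (fun t ht => ?_)
      ((integrable_one hx).add (integrable_two hx)) ?_
    · have hxt : 0 < x + t := by simp only [mem_Ici] at ht; linarith
      have h1 : HasDerivAt (fun t : ℝ => Real.exp (-t)) (-Real.exp (-t)) t := by
        simpa [Function.comp_def] using ((Real.hasDerivAt_exp (-t)).comp t ((hasDerivAt_id t).neg))
      have h2 : HasDerivAt (fun t : ℝ => (x + t)⁻¹) (-1 / (x + t) ^ 2) t := by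
        have := ((hasDerivAt_id t).const_add x).fun_inv (ne_of_gt hxt)
        simpa using this
      have h3 := (h1.fun_mul h2).fun_neg
      have heq : (fun t : ℝ => -(Real.exp (-t) * (x + t)⁻¹))
          = fun t : ℝ => -(Real.exp (-t) / (x + t)) := by
        funext u; rw [div_eq_mul_inv]
      rw [heq] at h3
      refine h3.congr_deriv ?_
      field_simp
      ring
    · have h0 : Tendsto (fun t : ℝ => Real.exp (-t) / x) atTop (𝓝 0) := by
        simpa using (Real.tendsto_exp_neg_atTop_nhds_zero).div_const x
      refine squeeze_zero_norm' ?_ h0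
      filter_upwards [eventually_ge_atTop (0 : ℝ)] with t ht
      have hxt : 0 < x + t := by linarith
      rw [norm_neg, Real.norm_eq_abs, abs_of_pos (by positivity)]
      gcongr
      all_goals first | positivity | linarith | exact (Real.exp_pos _).le
  rw [integral_add (integrable_one hx) (integrable_two hx)] at key
  have : Real.exp (-(0:ℝ)) = 1 := by norm_num
  rw [add_zero, this] at key
  have hF : (∫ t in Ioi (0:ℝ), Real.exp (-t) / (x + t)) = F x := rfl
  rw [hF] at key
  linarith [key]

lemma hasDerivAt_F {x : ℝ} (hx : 0 < x) : HasDerivAt F (F x - 1 / x) x := by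
  have key := hasDerivAt_integral_of_dominated_loc_of_deriv_le
    (F := fun u t => Real.exp (-t) / (u + t))
    (F' := fun u t => -(Real.exp (-t) / (u + t) ^ 2))
    (x₀ := x) (μ := volume.restrict (Ioi 0))
    (bound := fun t => Real.exp (-t) / (x / 2) ^ 2)
    (Metric.ball_mem_nhds x (half_pos hx)) ?_ (integrable_one hx) ?_ ?_ ?_ ?_
  · have hI := key.2
    have : (∫ t in Ioi (0:ℝ), -(Real.exp (-t) / (x + t) ^ 2))
        = -(1 / x - F x) := by
      rw [integral_neg, parts2 hx]
    rw [this] at hI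
    rw [neg_sub] at hI
    exact hI
  · filter_upwards [Ioi_mem_nhds (half_lt_self hx)] with u hu
    simp only [mem_Ioi] at hu
    have hu0 : 0 < u := lt_trans (half_pos hx) hu
    refine ContinuousOn.aestronglyMeasurable ?_ measurableSet_Ioi
    refine ContinuousOn.div (Continuous.continuousOn (by continuity))
      (Continuous.continuousOn (by continuity)) ?_
    intro t ht; simp only [mem_Ioi] at ht; positivity
  · refine ContinuousOn.aestronglyMeasurable ?_ measurableSet_Ioi
    refine ContinuousOn.neg ?_
    refine ContinuousOn.div (Continuous.continuousOn (by continuity))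
      (Continuous.continuousOn (by continuity)) ?_
    intro t ht; simp only [mem_Ioi] at ht; positivity
  · rw [ae_restrict_iff' measurableSet_Ioi]
    refine ae_of_all _ fun t ht u hu => ?_
    simp only [mem_Ioi] at ht
    rw [Metric.mem_ball, Real.dist_eq, abs_lt] at hu
    have hu2 : (0:ℝ) < x / 2 := half_pos hx
    have hu3 : x / 2 < u + t := by linarith
    have hut : (0:ℝ) < u + t := by linarith
    rw [norm_neg, Real.norm_eq_abs,
      abs_of_pos (div_pos (Real.exp_pos _) (pow_pos hut 2))]
    have hsq : (x / 2) ^ 2 ≤ (u + t) ^ 2 := by nlinarith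
    exact div_le_div_of_nonneg_left (Real.exp_pos _).le (pow_pos hu2 2) hsq
  · exact integrable_exp_neg.div_const _
  · rw [ae_restrict_iff' measurableSet_Ioi]
    refine ae_of_all _ fun t ht u hu => ?_
    simp only [mem_Ioi] at ht
    rw [Metric.mem_ball, Real.dist_eq, abs_lt] at hu
    have hut : 0 < u + t := by linarith
    have h2 : HasDerivAt (fun u : ℝ => (u + t)⁻¹) (-1 / (u + t) ^ 2) u := by
      simpa using ((hasDerivAt_id u).add_const t).fun_inv (ne_of_gt hut)
    have h3 := h2.const_mul (Real.exp (-t))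
    have heq : (fun u : ℝ => Real.exp (-t) * (u + t)⁻¹)
        = fun u : ℝ => Real.exp (-t) / (u + t) := by
      funext w; rw [div_eq_mul_inv]
    rw [heq] at h3
    refine h3.congr_deriv ?_
    field_simp


lemma exp_tsum (y : ℝ) : Real.exp y = ∑' n : ℕ, y ^ n / (Nat.factorial n : ℝ) := by
  rw [Real.exp_eq_exp_ℝ, NormedSpace.exp_eq_tsum_div]

lemma term_hasDerivAt (n : ℕ) (z : ℝ) :
    HasDerivAt (fun z : ℝ => (-1:ℝ) ^ (n + 1) * z ^ (n + 1) /
      ((n + 1 : ℝ) * (Nat.factorial (n + 1) : ℝ)))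
      ((-1:ℝ) ^ (n + 1) * z ^ n / (Nat.factorial (n + 1) : ℝ)) z := by
  have h := (hasDerivAt_pow (n + 1) z).const_mul
    ((-1:ℝ) ^ (n + 1) / ((n + 1 : ℝ) * (Nat.factorial (n + 1) : ℝ)))
  have hne : ((n : ℝ) + 1) ≠ 0 := by positivity
  have hfac : ((Nat.factorial (n + 1) : ℝ)) ≠ 0 := by positivity
  have heq : (fun z : ℝ => (-1:ℝ) ^ (n + 1) * z ^ (n + 1) /
      ((n + 1 : ℝ) * (Nat.factorial (n + 1) : ℝ)))
      = fun w : ℝ => (-1:ℝ) ^ (n + 1) /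
        ((n + 1 : ℝ) * (Nat.factorial (n + 1) : ℝ)) * w ^ (n + 1) := by
    funext w; field_simp
  rw [heq]
  refine h.congr_deriv ?_
  push_cast
  field_simp

lemma hasDerivAt_S (y : ℝ) :
    HasDerivAt S (∑' n : ℕ, (-1:ℝ) ^ (n + 1) * y ^ n / (Nat.factorial (n + 1) : ℝ)) y := by
  set R : ℝ := |y| + 1 with hR
  have hR0 : 0 < R := by positivity
  have hu : Summable (fun n : ℕ => R ^ n / (Nat.factorial n : ℝ)) :=
    Real.summable_pow_div_factorial R
  have key := hasDerivAt_tsum_of_isPreconnected (𝕜 := ℝ) (F := ℝ)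
    (g := fun (n : ℕ) (z : ℝ) => (-1:ℝ) ^ (n + 1) * z ^ (n + 1) /
      ((n + 1 : ℝ) * (Nat.factorial (n + 1) : ℝ)))
    (g' := fun (n : ℕ) (z : ℝ) => (-1:ℝ) ^ (n + 1) * z ^ n / (Nat.factorial (n + 1) : ℝ))
    (t := Metric.ball (0:ℝ) R) (y₀ := (0:ℝ)) (y := y)
    hu Metric.isOpen_ball (convex_ball (0:ℝ) R).isPreconnected
    (fun n z _ => ?_) (fun n z hz => ?_) (Metric.mem_ball_self hR0) ?_ ?_
  · exact key
  · exact term_hasDerivAt n z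
  · -- bound
    rw [mem_ball_zero_iff, Real.norm_eq_abs] at hz
    have h1 : |(-1:ℝ) ^ (n + 1) * z ^ n / (Nat.factorial (n + 1) : ℝ)|
        = |z| ^ n / (Nat.factorial (n + 1) : ℝ) := by
      rw [abs_div, abs_mul, abs_pow, abs_neg, abs_one, one_pow, one_mul,
        abs_pow, Nat.abs_cast]
    rw [Real.norm_eq_abs, h1]
    have h2 : |z| ^ n ≤ R ^ n := pow_le_pow_left₀ (abs_nonneg z) hz.le n
    have h3 : (Nat.factorial n : ℝ) ≤ (Nat.factorial (n + 1) : ℝ) := by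
      exact_mod_cast Nat.factorial_le (Nat.le_succ n)
    have h4 : (0:ℝ) < (Nat.factorial n : ℝ) := by positivity
    exact div_le_div₀ (pow_nonneg hR0.le n) h2 h4 h3
  · -- summable at 0
    have : (fun n : ℕ => (-1:ℝ) ^ (n + 1) * (0:ℝ) ^ (n + 1) /
        ((n + 1 : ℝ) * (Nat.factorial (n + 1) : ℝ))) = fun _ => 0 := by
      funext n
      rw [zero_pow (Nat.succ_ne_zero n)]
      ring
    exact this ▸ summable_zero
  · rw [mem_ball_zero_iff, Real.norm_eq_abs]
    linarith


lemma S_deriv_eq {y : ℝ} (hy : y ≠ 0) :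
    (∑' n : ℕ, (-1:ℝ) ^ (n + 1) * y ^ n / (Nat.factorial (n + 1) : ℝ))
      = (Real.exp (-y) - 1) / y := by
  have hsum : Summable (fun n : ℕ => (-y) ^ n / (Nat.factorial n : ℝ)) :=
    Real.summable_pow_div_factorial (-y)
  have h0 : Real.exp (-y) = 1 + ∑' n : ℕ, (-y) ^ (n + 1) / (Nat.factorial (n + 1) : ℝ) := by
    rw [exp_tsum (-y), hsum.tsum_eq_zero_add]
    norm_num
  have h1 : (∑' n : ℕ, (-y) ^ (n + 1) / (Nat.factorial (n + 1) : ℝ))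
      = y * ∑' n : ℕ, (-1:ℝ) ^ (n + 1) * y ^ n / (Nat.factorial (n + 1) : ℝ) := by
    rw [← tsum_mul_left]
    refine tsum_congr fun n => ?_
    rw [neg_pow]
    ring
  rw [h1] at h0
  field_simp
  linarith [h0]

lemma S_zero : S 0 = 0 := by
  unfold S
  have : (fun n : ℕ => (-1:ℝ) ^ (n + 1) * (0:ℝ) ^ (n + 1) /
      ((n + 1 : ℝ) * (Nat.factorial (n + 1) : ℝ))) = fun _ => 0 := by
    funext n
    rw [zero_pow (Nat.succ_ne_zero n)]
    ring
  rw [this, tsum_zero]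

lemma S_tendsto : Tendsto S (𝓝[>] (0:ℝ)) (𝓝 0) := by
  have h := (hasDerivAt_S 0).continuousAt.tendsto
  rw [S_zero] at h
  exact h.mono_left nhdsWithin_le_nhds

lemma Phi_zero : Phi 0 = -Real.eulerMascheroniConstant := by
  unfold Phi
  rw [← lemA]
  refine setIntegral_congr_fun measurableSet_Ioi fun t ht => ?_
  rw [zero_add]

lemma Phi_tendsto : Tendsto Phi (𝓝[>] (0:ℝ)) (𝓝 (-Real.eulerMascheroniConstant)) := by
  rw [← Phi_zero]
  have : ContinuousWithinAt Phi (Ioi 0) 0 := by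
    unfold Phi
    refine continuousWithinAt_of_dominated (bound := gbound 1) ?_ ?_ (gbound_integrable 1) ?_
    · filter_upwards [self_mem_nhdsWithin] with u hu
      simp only [mem_Ioi] at hu
      refine ContinuousOn.aestronglyMeasurable ?_ measurableSet_Ioi
      refine ContinuousOn.mul (Continuous.continuousOn (by continuity)) ?_
      refine ContinuousOn.log (Continuous.continuousOn (by continuity)) ?_
      intro t ht; simp only [mem_Ioi] at ht; positivity
    · filter_upwards [Ioc_mem_nhdsGT_of_mem (Set.mem_Ico.mpr ⟨le_refl 0, one_pos⟩)] with u hu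
      rw [ae_restrict_iff' measurableSet_Ioi]
      exact ae_of_all _ fun t ht => gbound_spec le_rfl hu.1.le hu.2 ht
    · rw [ae_restrict_iff' measurableSet_Ioi]
      refine ae_of_all _ fun t ht => ?_
      simp only [mem_Ioi] at ht
      have hc : ContinuousAt (fun x : ℝ => Real.exp (-t) * Real.log (x + t)) 0 := by
        refine ContinuousAt.mul continuousAt_const ?_
        have h1 : ContinuousAt (fun x : ℝ => x + t) 0 := by fun_prop
        exact h1.log (by rw [zero_add]; exact ne_of_gt ht)
      exact hc.continuousWithinAt
  exact this

noncomputable def v (y : ℝ) : ℝ := Real.exp (-y) * F y + Real.log y + S y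

lemma hasDerivAt_v {y : ℝ} (hy : 0 < y) : HasDerivAt v 0 y := by
  have hexp : HasDerivAt (fun y : ℝ => Real.exp (-y)) (-Real.exp (-y)) y := by
    simpa [Function.comp_def] using ((Real.hasDerivAt_exp (-y)).comp y ((hasDerivAt_id y).neg))
  have h1 := hexp.fun_mul (hasDerivAt_F hy)
  have h2 := Real.hasDerivAt_log (ne_of_gt hy)
  have h3 := hasDerivAt_S y
  rw [S_deriv_eq (ne_of_gt hy)] at h3
  have h := (h1.fun_add h2).fun_add h3
  refine HasDerivAt.congr_deriv (f := v) h ?_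
  field_simp
  ring

lemma v_const {a b : ℝ} (ha : 0 < a) (hab : a ≤ b) : v a = v b := by
  rcases hab.eq_or_lt with h | h
  · rw [h]
  · have hdiff : DifferentiableOn ℝ v (Icc a b) := fun z hz =>
      ((hasDerivAt_v (lt_of_lt_of_le ha hz.1)).differentiableAt).differentiableWithinAt
    have hderiv : ∀ z ∈ Ico a b, derivWithin v (Icc a b) z = 0 := fun z hz =>
      ((hasDerivAt_v (lt_of_lt_of_le ha hz.1)).hasDerivWithinAt).derivWithin
        ((uniqueDiffOn_Icc h) z ⟨hz.1, hz.2.le⟩)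
    exact (constant_of_derivWithin_zero hdiff hderiv b (right_mem_Icc.mpr hab)).symm

lemma v_tendsto : Tendsto v (𝓝[>] (0:ℝ)) (𝓝 (-Real.eulerMascheroniConstant)) := by
  have heq : ∀ y ∈ Ioi (0:ℝ), v y
      = Real.exp (-y) * Phi y + (1 - Real.exp (-y)) * Real.log y + S y := by
    intro y hy
    simp only [mem_Ioi] at hy
    rw [v, parts1 hy]
    ring
  have h1 : Tendsto (fun y : ℝ => Real.exp (-y) * Phi y) (𝓝[>] (0:ℝ))
      (𝓝 (-Real.eulerMascheroniConstant)) := by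
    have he : Tendsto (fun y : ℝ => Real.exp (-y)) (𝓝[>] (0:ℝ)) (𝓝 1) := by
      have : Tendsto (fun y : ℝ => Real.exp (-y)) (𝓝 (0:ℝ)) (𝓝 (Real.exp (-0))) :=
        (Real.continuous_exp.comp continuous_neg).tendsto 0
      simpa using this.mono_left nhdsWithin_le_nhds
    simpa using he.mul Phi_tendsto
  have h2 : Tendsto (fun y : ℝ => (1 - Real.exp (-y)) * Real.log y) (𝓝[>] (0:ℝ)) (𝓝 0) := by
    have hg : Tendsto (fun y : ℝ => |y * Real.log y|) (𝓝[>] (0:ℝ)) (𝓝 0) := by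
      have : Tendsto (fun y : ℝ => y * Real.log y) (𝓝 (0:ℝ)) (𝓝 ((0:ℝ) * Real.log 0)) :=
        Real.continuous_mul_log.tendsto 0
      rw [zero_mul] at this
      simpa using (this.mono_left nhdsWithin_le_nhds).abs
    refine squeeze_zero_norm' ?_ hg
    filter_upwards [self_mem_nhdsWithin] with y hy
    simp only [mem_Ioi] at hy
    have he1 : Real.exp (-y) ≤ 1 := by
      rw [Real.exp_le_one_iff]; linarith
    have he2 : 1 - y ≤ Real.exp (-y) := by
      have := Real.add_one_le_exp (-y); linarith
    rw [Real.norm_eq_abs, abs_mul, abs_of_nonneg (by linarith : 0 ≤ 1 - Real.exp (-y)),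
      abs_mul]
    have : 1 - Real.exp (-y) ≤ |y| := by
      rw [abs_of_pos hy]; linarith
    exact mul_le_mul_of_nonneg_right this (abs_nonneg _) |>.trans le_rfl
  have h := (h1.add h2).add S_tendsto
  rw [add_zero, add_zero] at h
  refine h.congr' ?_
  filter_upwards [self_mem_nhdsWithin] with y hy
  exact (heq y hy).symm

lemma v_eq {x : ℝ} (hx : 0 < x) : v x = -Real.eulerMascheroniConstant := by
  have hconst : Tendsto v (𝓝[>] (0:ℝ)) (𝓝 (v x)) := by
    refine Tendsto.congr' ?_ tendsto_const_nhds
    filter_upwards [Ioc_mem_nhdsGT_of_mem (Set.mem_Ico.mpr ⟨le_refl 0, hx⟩)] with y hy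
    exact (v_const hy.1 hy.2).symm
  exact tendsto_nhds_unique hconst v_tendsto

end GompertzAux

/-- For `x > 0`, `∫₀^∞ e^{-t}/(x+t) dt = -e^x (∑_{n≥1} (-1)^n x^n/(n·n!) + log x + γ)`.
For `x = 1` the left-hand side is Gompertz's constant. -/
theorem gompertz_integral_formula (x : ℝ) (hx : 0 < x) :
    (∫ t in Set.Ioi (0 : ℝ), Real.exp (-t) / (x + t))
      = -(Real.exp x) *
          ((∑' n : ℕ, (-1 : ℝ) ^ (n + 1) * x ^ (n + 1) /
              ((n + 1 : ℝ) * (Nat.factorial (n + 1) : ℝ)))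
            + Real.log x + Real.eulerMascheroniConstant) := by
  have hv := GompertzAux.v_eq hx
  rw [GompertzAux.v] at hv
  have hexp : Real.exp (-x) * Real.exp x = 1 := by
    rw [← Real.exp_add]; simp
  have hF : GompertzAux.F x = ∫ t in Set.Ioi (0 : ℝ), Real.exp (-t) / (x + t) := rfl
  have hS : GompertzAux.S x = ∑' n : ℕ, (-1 : ℝ) ^ (n + 1) * x ^ (n + 1) /
      ((n + 1 : ℝ) * (Nat.factorial (n + 1) : ℝ)) := rfl
  rw [hF, hS] at hv
  linear_combination Real.exp x * hv
    - (∫ t in Set.Ioi (0 : ℝ), Real.exp (-t) / (x + t)) * hexp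
end

section
/- Let E(x) = Σ_{n=1}^{∞} (−1)^n x^n/(n·n!), an everywhere-convergent power series. Then on the interval (0, ∞) the functions y₁(x) = e^x and y₂(x) = e^x·(E(x) + log x) both satisfy the differential equation x·y''(x) + (1−x)·y'(x) − y(x) = 0, and y₁ and y₂ are linearly independent over ℂ. -/
/-- The everywhere-convergent power series `E(x) = ∑_{n≥1} (-1)^n x^n/(n·n!)`. -/
noncomputable def Efun (x : ℝ) : ℝ :=
  ∑' n : ℕ, (-1 : ℝ) ^ (n + 1) * x ^ (n + 1) / ((n + 1 : ℝ) * (Nat.factorial (n + 1) : ℝ))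

open Real Filter Set

lemma exp_tsum (t : ℝ) : Real.exp t = ∑' n : ℕ, t ^ n / (Nat.factorial n : ℝ) := by
  rw [Real.exp_eq_exp_ℝ, NormedSpace.exp_eq_tsum_div]

lemma summable_aux (x : ℝ) : Summable (fun n : ℕ => x ^ n / (Nat.factorial n : ℝ)) :=
  Real.summable_pow_div_factorial x

lemma summable_E (x : ℝ) : Summable (fun n : ℕ =>
    (-1 : ℝ) ^ (n + 1) * x ^ (n + 1) / ((n + 1 : ℝ) * (Nat.factorial (n + 1) : ℝ))) := by
  have hu : Summable (fun n : ℕ => |x| ^ (n+1) / (Nat.factorial (n+1) : ℝ)) :=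
    (summable_aux |x|).comp_injective (add_left_injective 1)
  refine Summable.of_norm_bounded hu (fun n => ?_)
  have h1 : (0:ℝ) < (Nat.factorial (n+1) : ℝ) := by positivity
  have h2 : (Nat.factorial (n+1) : ℝ) ≤ (n+1 : ℝ) * (Nat.factorial (n+1) : ℝ) := by
    nlinarith
  rw [Real.norm_eq_abs, abs_div, abs_mul, abs_pow, abs_pow, abs_neg, abs_one, one_pow, one_mul]
  rw [abs_of_pos (by positivity : (0:ℝ) < (n+1 : ℝ) * (Nat.factorial (n+1) : ℝ))]
  gcongr

lemma hasDerivAt_E (x : ℝ) :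
    HasDerivAt (Efun) (∑' n : ℕ, (-1 : ℝ) ^ (n + 1) * x ^ n / (Nat.factorial (n + 1) : ℝ)) x := by
  set R : ℝ := |x| + 1 with hR
  have hxR : x ∈ Metric.ball (0:ℝ) R := by
    simpa [hR, Real.dist_eq] using lt_add_one |x|
  have hu : Summable (fun n : ℕ => R ^ n / (Nat.factorial n : ℝ)) := summable_aux R
  refine hasDerivAt_tsum_of_isPreconnected hu Metric.isOpen_ball
    (convex_ball (0:ℝ) R).isPreconnected
    (g := fun (n : ℕ) (y : ℝ) => (-1 : ℝ) ^ (n + 1) * y ^ (n + 1) / ((n + 1 : ℝ) * (Nat.factorial (n + 1) : ℝ)))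
    (g' := fun (n : ℕ) (y : ℝ) => (-1 : ℝ) ^ (n + 1) * y ^ n / (Nat.factorial (n + 1) : ℝ))
    (fun n y _ => ?_) (fun n y hy => ?_) hxR (summable_E x) hxR
  · have h := ((hasDerivAt_pow (n+1) y).const_mul ((-1:ℝ)^(n+1))).div_const
      ((n + 1 : ℝ) * (Nat.factorial (n + 1) : ℝ))
    refine h.congr_deriv ?_
    have : ((n:ℝ)+1) ≠ 0 := by positivity
    have hf : (Nat.factorial (n+1) : ℝ) ≠ 0 := by positivity
    push_cast
    field_simp
  · have hy' : |y| ≤ R := by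
      have := mem_ball_zero_iff.mp hy
      simpa using le_of_lt (by simpa using this)
    have h1 : ‖(-1 : ℝ) ^ (n + 1) * y ^ n / (Nat.factorial (n + 1) : ℝ)‖
        = |y| ^ n / (Nat.factorial (n+1) : ℝ) := by
      rw [Real.norm_eq_abs, abs_div, abs_mul, abs_pow, abs_pow, abs_neg, abs_one, one_pow,
        one_mul, abs_of_pos (by positivity : (0:ℝ) < (Nat.factorial (n+1) : ℝ))]
    rw [h1]
    have h2 : (Nat.factorial n : ℝ) ≤ (Nat.factorial (n+1) : ℝ) := by
      exact_mod_cast Nat.factorial_le (Nat.le_succ n)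
    exact div_le_div₀ (by positivity) (pow_le_pow_left₀ (abs_nonneg y) hy' n) (by positivity) h2

lemma Dsum_eq (x : ℝ) (hx : x ≠ 0) :
    (∑' n : ℕ, (-1 : ℝ) ^ (n + 1) * x ^ n / (Nat.factorial (n + 1) : ℝ))
      = (Real.exp (-x) - 1) / x := by
  have hs : Summable (fun n : ℕ => (-x) ^ n / (Nat.factorial n : ℝ)) := summable_aux (-x)
  have key : x * (∑' n : ℕ, (-1 : ℝ) ^ (n + 1) * x ^ n / (Nat.factorial (n + 1) : ℝ))
      = Real.exp (-x) - 1 := by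
    have h1 : x * (∑' n : ℕ, (-1 : ℝ) ^ (n + 1) * x ^ n / (Nat.factorial (n + 1) : ℝ))
        = ∑' n : ℕ, (-x) ^ (n+1) / (Nat.factorial (n + 1) : ℝ) := by
      rw [← tsum_mul_left]
      congr 1; funext n
      rw [neg_pow, pow_succ]
      ring
    have h2 : Real.exp (-x) = 1 + ∑' n : ℕ, (-x) ^ (n+1) / (Nat.factorial (n + 1) : ℝ) := by
      rw [exp_tsum (-x), hs.tsum_eq_zero_add]
      simp
    rw [h1, h2]; ring
  field_simp at key ⊢
  linarith [key]

lemma hasDerivAt_g {x : ℝ} (hx : 0 < x) :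
    HasDerivAt (fun u : ℝ => Efun u + Real.log u) (Real.exp (-x) / x) x := by
  have h := (hasDerivAt_E x).add (Real.hasDerivAt_log hx.ne')
  rw [Dsum_eq x hx.ne'] at h
  refine h.congr_deriv ?_
  field_simp
  ring

lemma hasDerivAt_y2 {x : ℝ} (hx : 0 < x) :
    HasDerivAt (fun u : ℝ => Real.exp u * (Efun u + Real.log u))
      (Real.exp x * (Efun x + Real.log x) + 1 / x) x := by
  have h := (Real.hasDerivAt_exp x).mul (hasDerivAt_g hx)
  refine h.congr_deriv ?_
  rw [mul_div_assoc'] at *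
  rw [← Real.exp_add]
  simp

lemma g_strictMono : StrictMonoOn (fun u : ℝ => Efun u + Real.log u) (Set.Ioi 0) := by
  apply strictMonoOn_of_deriv_pos (convex_Ioi 0)
  · exact fun x hx =>
      (hasDerivAt_g (Set.mem_Ioi.mp hx)).differentiableAt.continuousAt.continuousWithinAt
  · intro x hx
    rw [interior_Ioi] at hx
    rw [(hasDerivAt_g (Set.mem_Ioi.mp hx)).deriv]
    have := Set.mem_Ioi.mp hx
    positivity


/-- On `(0, ∞)`, both `y₁(x) = e^x` and `y₂(x) = e^x (E(x) + log x)` satisfy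
`x y'' + (1-x) y' - y = 0`, and they are linearly independent over `ℂ`. -/
theorem gompertz_ODE_solutions :
    (∀ x : ℝ, Summable (fun n : ℕ =>
        (-1 : ℝ) ^ (n + 1) * x ^ (n + 1) / ((n + 1 : ℝ) * (Nat.factorial (n + 1) : ℝ)))) ∧
    (∀ x ∈ Set.Ioi (0 : ℝ),
        x * iteratedDeriv 2 Real.exp x + (1 - x) * deriv Real.exp x - Real.exp x = 0) ∧
    (∀ x ∈ Set.Ioi (0 : ℝ),
        x * iteratedDeriv 2 (fun u : ℝ => Real.exp u * (Efun u + Real.log u)) x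
          + (1 - x) * deriv (fun u : ℝ => Real.exp u * (Efun u + Real.log u)) x
          - Real.exp x * (Efun x + Real.log x) = 0) ∧
    (∀ a b : ℂ,
      (∀ x ∈ Set.Ioi (0 : ℝ),
        a * (Real.exp x : ℂ) + b * ((Real.exp x * (Efun x + Real.log x) : ℝ) : ℂ) = 0) →
      a = 0 ∧ b = 0) := by
  refine ⟨summable_E, ?_, ?_, ?_⟩
  · intro x _
    rw [show (2:ℕ) = 1 + 1 from rfl, iteratedDeriv_succ, iteratedDeriv_one,
      Real.deriv_exp, Real.deriv_exp]
    ring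
  · intro x hx
    have hx : (0:ℝ) < x := hx
    have hev : deriv (fun u : ℝ => Real.exp u * (Efun u + Real.log u))
        =ᶠ[nhds x] fun u : ℝ => Real.exp u * (Efun u + Real.log u) + 1/u := by
      filter_upwards [Ioi_mem_nhds hx] with u hu
      exact (hasDerivAt_y2 hu).deriv
    have h3 : HasDerivAt (fun u : ℝ => Real.exp u * (Efun u + Real.log u) + 1/u)
        ((Real.exp x * (Efun x + Real.log x) + 1/x) + (-(x^2)⁻¹)) x := by
      have h4 := (hasDerivAt_y2 hx).add (hasDerivAt_inv hx.ne')
      simp only [one_div] at h4 ⊢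
      exact h4
    have h2 : iteratedDeriv 2 (fun u : ℝ => Real.exp u * (Efun u + Real.log u)) x
        = (Real.exp x * (Efun x + Real.log x) + 1/x) + (-(x^2)⁻¹) := by
      rw [show (2:ℕ) = 1 + 1 from rfl, iteratedDeriv_succ, iteratedDeriv_one, hev.deriv_eq]
      exact h3.deriv
    rw [h2, (hasDerivAt_y2 hx).deriv]
    field_simp
    ring
  · intro a b hab
    have h12 : (fun u : ℝ => Efun u + Real.log u) 1 < (fun u : ℝ => Efun u + Real.log u) 2 :=
      g_strictMono (by norm_num) (by norm_num) (by norm_num)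
    simp only at h12
    have key : ∀ x : ℝ, 0 < x → a + b * ((Efun x + Real.log x : ℝ) : ℂ) = 0 := by
      intro x hxp
      have h := hab x hxp
      have h' : (Real.exp x : ℂ) * (a + b * ((Efun x + Real.log x : ℝ) : ℂ)) = 0 := by
        push_cast at h ⊢
        linear_combination h
      rcases mul_eq_zero.mp h' with h'' | h''
      · exact absurd h'' (Complex.ofReal_ne_zero.mpr (Real.exp_ne_zero x))
      · exact h''
    have f1 := key 1 one_pos
    have f2 := key 2 two_pos
    have hb : b * (((Efun 1 + Real.log 1) - (Efun 2 + Real.log 2) : ℝ) : ℂ) = 0 := by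
      push_cast at f1 f2 ⊢
      linear_combination f1 - f2
    have hne : (((Efun 1 + Real.log 1) - (Efun 2 + Real.log 2) : ℝ) : ℂ) ≠ 0 :=
      Complex.ofReal_ne_zero.mpr (sub_ne_zero.mpr h12.ne)
    have hb0 : b = 0 := (mul_eq_zero.mp hb).resolve_right hne
    refine ⟨?_, hb0⟩
    rw [hb0, zero_mul, add_zero] at f1
    exact f1
end

section
/- For α ∈ ℂ with Re α ∉ ℤ set n_α = ⌊Re α⌋ and h_α(y) = Γ(n_α + 1 − y)·(1/Γ(−y)), a function holomorphic in a neighbourhood of α, and for j ∈ ℕ and x > 0 define Λ_{α,j}(x) = (d/dy)^j [ h_α(y) · exp(−(y+1)·log x) ] evaluated at y = α. Then for all x > 0: (i) (d/dx) Λ_{α,j}(x) = Λ_{α+1,j}(x), and (ii) −x·Λ_{α,j}(x) = α·Λ_{α−1,j}(x) + j·Λ_{α−1,j−1}(x), where the last term is interpreted as 0 when j = 0. (These are the identities L(z·m) = (d/dx)L(m) and L(dm/dz) = −x·L(m) of the paper's Proposition on the rational inverse Laplace transform, on the monomials m = z^α (log z)^j with non-integral Re α.) -/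
open Complex

open Topology Filter

section aux

variable {U : Set ℂ}

/-- constants pull out of iterated derivatives unconditionally -/
lemma iter_const_mul (c : ℂ) (f : ℂ → ℂ) (n : ℕ) :
    iteratedDeriv n (fun y => c * f y) = fun x => c * iteratedDeriv n f x := by
  induction n generalizing f with
  | zero => simp [iteratedDeriv_zero]
  | succ n ih =>
    rw [iteratedDeriv_succ']
    have : (deriv fun y => c * f y) = fun y => c * deriv f y :=
      funext fun y => deriv_const_mul_field c
    rw [this, ih, iteratedDeriv_succ']

lemma iter_add (hU : IsOpen U) {x : ℂ} (hx : x ∈ U) {f g : ℂ → ℂ}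
    (hf : AnalyticOnNhd ℂ f U) (hg : AnalyticOnNhd ℂ g U) (n : ℕ) :
    iteratedDeriv n (fun y => f y + g y) x =
      iteratedDeriv n f x + iteratedDeriv n g x := by
  induction n generalizing f g with
  | zero => simp [iteratedDeriv_zero]
  | succ n ih =>
    rw [iteratedDeriv_succ', iteratedDeriv_succ' (f := f), iteratedDeriv_succ' (f := g)]
    have hev : (deriv fun y => f y + g y) =ᶠ[𝓝 x] fun y => deriv f y + deriv g y := by
      filter_upwards [hU.mem_nhds hx] with y hy
      exact deriv_add ((hf y hy).differentiableAt) ((hg y hy).differentiableAt)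
    rw [hev.iteratedDeriv_eq n, ih hf.deriv hg.deriv]

lemma iter_linear_mul (hU : IsOpen U) {x : ℂ} (hx : x ∈ U) {F : ℂ → ℂ}
    (hF : AnalyticOnNhd ℂ F U) (j : ℕ) :
    iteratedDeriv j (fun y => y * F y) x =
      x * iteratedDeriv j F x + (j : ℂ) * iteratedDeriv (j - 1) F x := by
  induction j generalizing F with
  | zero => simp [iteratedDeriv_zero]
  | succ j ih =>
    rw [iteratedDeriv_succ']
    have hev : (deriv fun y => y * F y) =ᶠ[𝓝 x] fun y => F y + y * deriv F y := by
      filter_upwards [hU.mem_nhds hx] with y hy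
      have := (hasDerivAt_id y).fun_mul ((hF y hy).differentiableAt.hasDerivAt)
      simpa [mul_comm] using this.deriv
    rw [hev.iteratedDeriv_eq j,
      iter_add hU hx hF ((analyticOnNhd_id).mul hF.deriv) j,
      ih hF.deriv]
    rw [← iteratedDeriv_succ']
    cases j with
    | zero =>
      simp only [Nat.cast_one, Nat.cast_zero, iteratedDeriv_one, iteratedDeriv_zero,
        Nat.zero_sub, Nat.sub_self]
      ring
    | succ m =>
      rw [← iteratedDeriv_succ']
      push_cast
      ring

end aux

section aux2

variable {U : Set ℂ}

lemma analytic_expfac (hU : IsOpen U) (c L : ℂ) :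
    AnalyticOnNhd ℂ (fun y => Complex.exp (-(y + c) * L)) U :=
  ((((differentiable_id.add_const c).neg.mul_const L).cexp).differentiableOn).analyticOnNhd hU

lemma phi_succ (hU : IsOpen U) {z : ℂ} (hz : z ∈ U) {h : ℂ → ℂ}
    (hh : AnalyticOnNhd ℂ h U) (c L : ℂ) (j : ℕ) :
    iteratedDeriv (j + 1) (fun y => h y * Complex.exp (-(y + c) * L)) z
      = iteratedDeriv j (fun y => deriv h y * Complex.exp (-(y + c) * L)) z
        + (-L) * iteratedDeriv j (fun y => h y * Complex.exp (-(y + c) * L)) z := by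
  rw [iteratedDeriv_succ']
  have hev : (deriv fun y => h y * Complex.exp (-(y + c) * L)) =ᶠ[𝓝 z]
      fun y => deriv h y * Complex.exp (-(y + c) * L)
        + (-L) * (h y * Complex.exp (-(y + c) * L)) := by
    filter_upwards [hU.mem_nhds hz] with y hy
    have hE : HasDerivAt (fun y : ℂ => Complex.exp (-(y + c) * L))
        (Complex.exp (-(y + c) * L) * (-1 * L)) y :=
      (((hasDerivAt_id y).add_const c).neg.mul_const L).cexp
    have := ((hh y hy).differentiableAt.hasDerivAt).fun_mul hE
    rw [this.deriv]; ring
  rw [hev.iteratedDeriv_eq j,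
    iter_add hU hz (hh.deriv.mul (analytic_expfac hU c L))
      (analyticOnNhd_const.mul (hh.mul (analytic_expfac hU c L))) j,
    iter_const_mul (-L) (fun y => h y * Complex.exp (-(y + c) * L)) j]

lemma phi_scale {x : ℝ} (hx : 0 < x) (h : ℂ → ℂ) (c : ℂ) (j : ℕ) (z : ℂ) :
    iteratedDeriv j (fun y => h y * Complex.exp (-(y + (c + 1)) * (Real.log x : ℂ))) z
      = (x : ℂ)⁻¹ * iteratedDeriv j (fun y => h y * Complex.exp (-(y + c) * (Real.log x : ℂ))) z := by
  have hfun : (fun y => h y * Complex.exp (-(y + (c + 1)) * (Real.log x : ℂ)))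
      = fun y => (x : ℂ)⁻¹ * (h y * Complex.exp (-(y + c) * (Real.log x : ℂ))) := by
    funext y
    have h1 : (-(y + (c + 1)) * (Real.log x : ℂ))
        = (-(y + c) * (Real.log x : ℂ)) + (-(Real.log x : ℂ)) := by ring
    have h2 : Complex.exp (-(Real.log x : ℂ)) = (x : ℂ)⁻¹ := by
      rw [← Complex.ofReal_neg, ← Complex.ofReal_exp, Real.exp_neg, Real.exp_log hx,
        Complex.ofReal_inv]
    rw [h1, Complex.exp_add, h2]; ring
  rw [hfun, iter_const_mul]

lemma keyA (hU : IsOpen U) {z : ℂ} (hz : z ∈ U) (j : ℕ) :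
    ∀ (h : ℂ → ℂ), AnalyticOnNhd ℂ h U → ∀ (c : ℂ) (x : ℝ), 0 < x →
    HasDerivAt (fun u : ℝ =>
        iteratedDeriv j (fun y => h y * Complex.exp (-(y + c) * (Real.log u : ℂ))) z)
      (iteratedDeriv j
        (fun y => -(y + c) * h y * Complex.exp (-(y + (c + 1)) * (Real.log x : ℂ))) z) x := by
  induction j with
  | zero =>
    intro h hh c x hx
    simp only [iteratedDeriv_zero]
    have hE : HasDerivAt (fun w : ℂ => Complex.exp (-(z + c) * w))
        (Complex.exp (-(z + c) * (Real.log x : ℂ)) * (-(z + c))) ((Real.log x : ℝ) : ℂ) := by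
      simpa [mul_comm] using
        ((hasDerivAt_id ((Real.log x : ℝ) : ℂ)).const_mul (-(z + c))).cexp
    have hcomp : HasDerivAt (fun u : ℝ => Complex.exp (-(z + c) * (Real.log u : ℂ)))
        (x⁻¹ • (Complex.exp (-(z + c) * (Real.log x : ℂ)) * (-(z + c)))) x :=
      HasDerivAt.scomp (x := x) (h := Real.log) (hE.comp_ofReal) (Real.hasDerivAt_log hx.ne')
    have := hcomp.const_mul (h z)
    refine this.congr_deriv ?_
    have h2 : Complex.exp (-(z + (c + 1)) * (Real.log x : ℂ))
        = Complex.exp (-(z + c) * (Real.log x : ℂ)) * (x : ℂ)⁻¹ := by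
      have h1 : (-(z + (c + 1)) * (Real.log x : ℂ))
          = (-(z + c) * (Real.log x : ℂ)) + (-(Real.log x : ℂ)) := by ring
      rw [h1, Complex.exp_add, ← Complex.ofReal_neg, ← Complex.ofReal_exp, Real.exp_neg,
        Real.exp_log hx, Complex.ofReal_inv]
    rw [h2]
    rw [real_smul]
    push_cast
    ring
  | succ j ih =>
    intro h hh c x hx
    have hfe : (fun u : ℝ =>
        iteratedDeriv (j + 1) (fun y => h y * Complex.exp (-(y + c) * (Real.log u : ℂ))) z)
        = fun u : ℝ =>
          iteratedDeriv j (fun y => deriv h y * Complex.exp (-(y + c) * (Real.log u : ℂ))) z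
          + (-((Real.log u : ℝ) : ℂ)) *
            iteratedDeriv j (fun y => h y * Complex.exp (-(y + c) * (Real.log u : ℂ))) z :=
      funext fun u => phi_succ hU hz hh c _ j
    rw [hfe]
    have h1 := ih (deriv h) hh.deriv c x hx
    have hlog : HasDerivAt (fun u : ℝ => (-((Real.log u : ℝ) : ℂ)))
        (-((x⁻¹ : ℝ) : ℂ)) x := ((Real.hasDerivAt_log hx.ne').ofReal_comp).neg
    have h2 := hlog.mul (ih h hh c x hx)
    have hsum := h1.add h2
    refine hsum.congr_deriv ?_
    -- now prove the target iterated derivative equals the computed sum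
    have hgoal : iteratedDeriv (j + 1)
        (fun y => -(y + c) * h y * Complex.exp (-(y + (c + 1)) * (Real.log x : ℂ))) z
        = iteratedDeriv j
            (fun y => deriv (fun y => -(y + c) * h y) y *
              Complex.exp (-(y + (c + 1)) * (Real.log x : ℂ))) z
          + (-((Real.log x : ℝ) : ℂ)) * iteratedDeriv j
            (fun y => -(y + c) * h y * Complex.exp (-(y + (c + 1)) * (Real.log x : ℂ))) z := by
      have hg : AnalyticOnNhd ℂ (fun y => -(y + c) * h y) U :=
        ((analyticOnNhd_id.add analyticOnNhd_const).neg).mul hh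
      exact phi_succ hU hz hg (c + 1) _ j
    rw [hgoal]
    have hderiv_g : (fun y => deriv (fun y => -(y + c) * h y) y *
          Complex.exp (-(y + (c + 1)) * (Real.log x : ℂ))) =ᶠ[𝓝 z]
        fun y => (-1 : ℂ) * (h y * Complex.exp (-(y + (c + 1)) * (Real.log x : ℂ)))
          + -(y + c) * deriv h y * Complex.exp (-(y + (c + 1)) * (Real.log x : ℂ)) := by
      filter_upwards [hU.mem_nhds hz] with y hy
      have hd : HasDerivAt (fun y : ℂ => -(y + c) * h y)
          ((-1) * h y + (-(y + c)) * deriv h y) y :=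
        (((hasDerivAt_id y).add_const c).neg).mul ((hh y hy).differentiableAt.hasDerivAt)
      rw [hd.deriv]; ring
    have hf' : AnalyticOnNhd ℂ
        (fun y => (-1 : ℂ) * (h y * Complex.exp (-(y + (c + 1)) * (Real.log x : ℂ)))) U :=
      analyticOnNhd_const.mul (hh.mul (analytic_expfac hU (c + 1) _))
    have hg' : AnalyticOnNhd ℂ
        (fun y => -(y + c) * deriv h y * Complex.exp (-(y + (c + 1)) * (Real.log x : ℂ))) U :=
      (((analyticOnNhd_id.add analyticOnNhd_const).neg).mul hh.deriv).mul
          (analytic_expfac hU (c + 1) _)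
    rw [hderiv_g.iteratedDeriv_eq j,
      iter_add hU hz hf' hg' j,
      iter_const_mul (-1 : ℂ)
        (fun y => h y * Complex.exp (-(y + (c + 1)) * (Real.log x : ℂ))) j]
    beta_reduce
    rw [phi_scale hx h c j z]
    push_cast
    ring

end aux2

section gammastuff

def NonInt : Set ℂ := {y | ∀ m : ℤ, y.re ≠ (m : ℝ)}

lemma isOpen_nonInt : IsOpen NonInt := by
  have h : NonInt = Complex.re ⁻¹' (Set.range ((↑) : ℤ → ℝ))ᶜ := by
    ext y
    simp only [NonInt, Set.mem_setOf_eq, Set.mem_preimage, Set.mem_compl_iff, Set.mem_range,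
      not_exists]
    constructor
    · intro h m hm; exact h m hm.symm
    · intro h m hm; exact h m hm.symm
  rw [h]
  exact IsOpen.preimage Complex.continuous_re
    (Int.isClosedEmbedding_coe_real.isClosed_range.isOpen_compl)

lemma analytic_Gamma_sub (k : ℤ) :
    AnalyticOnNhd ℂ (fun y => Complex.Gamma ((k : ℂ) - y)) NonInt := by
  refine DifferentiableOn.analyticOnNhd
    (fun y hy => DifferentiableAt.differentiableWithinAt ?_) isOpen_nonInt
  have hd : DifferentiableAt ℂ Complex.Gamma ((k : ℂ) - y) := by
    apply Complex.differentiableAt_Gamma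
    intro m hm
    have h1 := congrArg Complex.re hm
    simp only [Complex.sub_re, Complex.intCast_re, Complex.neg_re, Complex.natCast_re] at h1
    exact hy (k + m) (by push_cast; linarith)
  exact hd.comp y ((differentiableAt_const _).sub differentiableAt_id)

lemma analytic_invGamma_neg :
    AnalyticOnNhd ℂ (fun y : ℂ => (Complex.Gamma (-y))⁻¹) NonInt := by
  refine DifferentiableOn.analyticOnNhd (Differentiable.differentiableOn ?_) isOpen_nonInt
  exact fun y => (Complex.differentiable_one_div_Gamma (-y)).comp y differentiable_neg.differentiableAt

lemma analytic_invGamma_one_sub :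
    AnalyticOnNhd ℂ (fun y : ℂ => (Complex.Gamma (1 - y))⁻¹) NonInt := by
  refine DifferentiableOn.analyticOnNhd (Differentiable.differentiableOn ?_) isOpen_nonInt
  exact fun y => (Complex.differentiable_one_div_Gamma (1 - y)).comp y
    ((differentiable_const _).sub differentiable_id).differentiableAt

end gammastuff

/-- `Λ_{α,j}(x) = (d/dy)^j [Γ(⌊Re α⌋ + 1 - y)·(1/Γ(-y))·exp(-(y+1) log x)]` at `y = α`. -/
noncomputable def Lam (α : ℂ) (j : ℕ) (x : ℝ) : ℂ :=
  iteratedDeriv j (fun y : ℂ =>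
    Complex.Gamma ((⌊α.re⌋ : ℂ) + 1 - y) * (Complex.Gamma (-y))⁻¹ *
      Complex.exp (-(y + 1) * (Real.log x : ℂ))) α

/-- The rational inverse Laplace transform intertwines multiplication by `z` with `d/dx`, and
`d/dz` with multiplication by `-x`, on the monomials `z^α (log z)^j` with `Re α ∉ ℤ`:
`(d/dx) Λ_{α,j}(x) = Λ_{α+1,j}(x)` and `-x Λ_{α,j}(x) = α Λ_{α-1,j}(x) + j Λ_{α-1,j-1}(x)`. -/
theorem rational_inverse_laplace_intertwines
    (α : ℂ) (hα : ∀ m : ℤ, α.re ≠ (m : ℝ)) (j : ℕ) :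
    (∀ x : ℝ, 0 < x → deriv (fun u : ℝ => Lam α j u) x = Lam (α + 1) j x) ∧
    (∀ x : ℝ, 0 < x →
      -(x : ℂ) * Lam α j x = α * Lam (α - 1) j x + (j : ℂ) * Lam (α - 1) (j - 1) x) := by
  have hU : IsOpen NonInt := isOpen_nonInt
  have hzα : α ∈ NonInt := hα
  set n : ℤ := ⌊α.re⌋ with hn
  set h : ℂ → ℂ := fun y => Complex.Gamma ((n : ℂ) + 1 - y) * (Complex.Gamma (-y))⁻¹ with hh_def
  have hGfun : (fun y : ℂ => Complex.Gamma ((n : ℂ) + 1 - y))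
      = fun y => Complex.Gamma (((n + 1 : ℤ) : ℂ) - y) := by
    funext y; congr 1; push_cast; ring
  have h_h : AnalyticOnNhd ℂ h NonInt := by
    have he : h = fun y => Complex.Gamma (((n + 1 : ℤ) : ℂ) - y) * (Complex.Gamma (-y))⁻¹ := by
      funext y; rw [hh_def]; push_cast; ring
    rw [he]
    exact (analytic_Gamma_sub (n + 1)).mul analytic_invGamma_neg
  constructor
  · -- part (i)
    intro x hx
    have hkey := keyA hU hzα j h h_h 1 x hx
    have hL : deriv (fun u : ℝ => Lam α j u) x
        = iteratedDeriv j (fun y =>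
            -(y + 1) * h y * Complex.exp (-(y + (1 + 1)) * (Real.log x : ℂ))) α := hkey.deriv
    rw [hL]
    -- now identify the RHS with Lam (α+1) j x
    have hfloor : ⌊(α + 1).re⌋ = n + 1 := by
      rw [Complex.add_re, Complex.one_re, Int.floor_add_one]
    show _ = iteratedDeriv j (fun y : ℂ =>
      Complex.Gamma ((⌊(α + 1).re⌋ : ℂ) + 1 - y) * (Complex.Gamma (-y))⁻¹ *
        Complex.exp (-(y + 1) * (Real.log x : ℂ))) (α + 1)
    rw [hfloor]
    set f : ℂ → ℂ := fun y : ℂ =>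
      Complex.Gamma (((n + 1 : ℤ) : ℂ) + 1 - y) * (Complex.Gamma (-y))⁻¹ *
        Complex.exp (-(y + 1) * (Real.log x : ℂ)) with hf_def
    have hshift : iteratedDeriv j f (α + 1) = iteratedDeriv j (fun z => f (z + 1)) α := by
      rw [iteratedDeriv_comp_add_const]
    rw [hshift]
    congr 1
    funext z
    rw [hf_def]
    simp only []
    have e1 : ((n + 1 : ℤ) : ℂ) + 1 - (z + 1) = (n : ℂ) + 1 - z := by push_cast; ring
    have e2 : (Complex.Gamma (-(z + 1)))⁻¹ = (-(z + 1)) * (Complex.Gamma (-z))⁻¹ := by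
      have h3 := Complex.one_div_Gamma_eq_self_mul_one_div_Gamma_add_one (-(z + 1))
      rw [show (-(z + 1) + 1 : ℂ) = -z by ring] at h3
      exact h3
    have e3 : -(z + 1 + 1) * ((Real.log x : ℝ) : ℂ) = -(z + (1 + 1)) * (Real.log x : ℂ) := by
      ring
    rw [e1, e2, e3, hh_def]
    ring
  · -- part (ii)
    intro x hx
    set L : ℂ := (Real.log x : ℂ) with hL_def
    set h2 : ℂ → ℂ := fun y => Complex.Gamma ((n : ℂ) + 1 - y) * (Complex.Gamma (1 - y))⁻¹
      with hh2_def
    have h_h2 : AnalyticOnNhd ℂ h2 NonInt := by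
      have he : h2 = fun y => Complex.Gamma (((n + 1 : ℤ) : ℂ) - y) *
          (Complex.Gamma (1 - y))⁻¹ := by
        funext y; rw [hh2_def]; push_cast; ring_nf
      rw [he]
      exact (analytic_Gamma_sub (n + 1)).mul analytic_invGamma_one_sub
    -- Step 1 : rewrite Lam (α - 1) k x
    have hfloor : ⌊(α - 1).re⌋ = n - 1 := by
      rw [Complex.sub_re, Complex.one_re, Int.floor_sub_one]
    have hstep1 : ∀ k : ℕ, Lam (α - 1) k x
        = iteratedDeriv k (fun y => h2 y * Complex.exp (-(y + 0) * L)) α := by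
      intro k
      show iteratedDeriv k (fun y : ℂ =>
        Complex.Gamma ((⌊(α - 1).re⌋ : ℂ) + 1 - y) * (Complex.Gamma (-y))⁻¹ *
          Complex.exp (-(y + 1) * L)) (α - 1) = _
      rw [hfloor]
      set g : ℂ → ℂ := fun y : ℂ =>
        Complex.Gamma (((n - 1 : ℤ) : ℂ) + 1 - y) * (Complex.Gamma (-y))⁻¹ *
          Complex.exp (-(y + 1) * L) with hg_def
      have hshift : iteratedDeriv k g (α - 1) = iteratedDeriv k (fun z => g (z + (-1))) α := by
        rw [iteratedDeriv_comp_add_const]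
        norm_num [sub_eq_add_neg]
      rw [hshift]
      congr 1
      funext z
      rw [hg_def]
      simp only []
      have e1 : ((n - 1 : ℤ) : ℂ) + 1 - (z + (-1)) = (n : ℂ) + 1 - z := by push_cast; ring
      have e2 : -(z + (-1)) = 1 - z := by ring
      have e3 : -(z + (-1) + 1) * L = -(z + 0) * L := by ring
      rw [e1, e2, e3, hh2_def]
    -- Step 2 : rewrite -(x) * Lam α j x
    have hFanal : AnalyticOnNhd ℂ (fun y => h2 y * Complex.exp (-(y + 0) * L)) NonInt :=
      h_h2.mul (analytic_expfac hU 0 L)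
    have hscale := phi_scale hx h 0 j α
    have hone : (fun y => h y * Complex.exp (-(y + (0 + 1)) * L))
        = fun y => h y * Complex.exp (-(y + 1) * L) := by norm_num
    rw [hone] at hscale
    have hLam : Lam α j x = (x : ℂ)⁻¹ *
        iteratedDeriv j (fun y => h y * Complex.exp (-(y + 0) * L)) α := hscale
    have hrel : (fun y => h y * Complex.exp (-(y + 0) * L))
        = fun y => (-1 : ℂ) * (y * (h2 y * Complex.exp (-(y + 0) * L))) := by
      funext y
      have e2 : (Complex.Gamma (-y))⁻¹ = (-y) * (Complex.Gamma (1 - y))⁻¹ := by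
        have h3 := Complex.one_div_Gamma_eq_self_mul_one_div_Gamma_add_one (-y)
        rw [show (-y + 1 : ℂ) = 1 - y by ring] at h3
        exact h3
      rw [hh_def, hh2_def]
      simp only []
      rw [e2]
      ring
    have hlin := iter_linear_mul hU hzα hFanal j
    calc -(x : ℂ) * Lam α j x
        = -((x : ℂ) * (x : ℂ)⁻¹) *
            iteratedDeriv j (fun y => h y * Complex.exp (-(y + 0) * L)) α := by
          rw [hLam]; ring
      _ = -iteratedDeriv j (fun y => h y * Complex.exp (-(y + 0) * L)) α := by
          rw [mul_inv_cancel₀ (by exact_mod_cast hx.ne')]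
          ring
      _ = -iteratedDeriv j
            (fun y => (-1 : ℂ) * (y * (h2 y * Complex.exp (-(y + 0) * L)))) α := by
          rw [hrel]
      _ = iteratedDeriv j (fun y => y * (h2 y * Complex.exp (-(y + 0) * L))) α := by
          rw [iter_const_mul (-1 : ℂ) (fun y => y * (h2 y * Complex.exp (-(y + 0) * L))) j]
          ring
      _ = α * iteratedDeriv j (fun y => h2 y * Complex.exp (-(y + 0) * L)) α
          + (j : ℂ) * iteratedDeriv (j - 1) (fun y => h2 y * Complex.exp (-(y + 0) * L)) α :=
          hlin
      _ = α * Lam (α - 1) j x + (j : ℂ) * Lam (α - 1) (j - 1) x := by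
          rw [hstep1 j, hstep1 (j - 1)]
end
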